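/- arXiv:1609.03028 — 7 statements merged into one kernel-verified Lean document; each statement's English description precedes it below -/
import Mathlib

section
/- If R is a group acting on a group G such that G is a central product G = G₁ * ⋯ * Gₙ of perfect subgroups G₁,…,Gₙ, the action of R permutes the set {G₁,…,Gₙ} semiregularly, G is finite, and the orders of R and G are coprime, then the fixed-point subgroup C_G(R) is perfect. -/
attribute [local instance] commutatorElement

lemma pairwise_of_forall_rel {α : Type*} {r : α → α → Prop} (h : ∀ a b, r a b) :
    ∀ l : List α, l.Pairwise r
  | [] => List.Pairwise.nil
  | a :: t => List.Pairwise.cons (fun b _ => h a b) (pairwise_of_forall_rel h t)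

lemma list_prod_mul_distrib {α M : Type*} [Monoid M] (u v : α → M) :
    ∀ l : List α, l.Pairwise (fun a b => Commute (v a) (u b)) →
      (l.map fun a => u a * v a).prod = (l.map u).prod * (l.map v).prod
  | [], _ => by simp
  | a :: t, h => by
    obtain ⟨h1, h2⟩ := List.pairwise_cons.mp h
    have hcm : Commute (v a) ((t.map u).prod) :=
      Commute.list_prod_right _ _ (by
        intro x hx
        obtain ⟨b, hb, rfl⟩ := List.mem_map.mp hx
        exact h1 b hb)
    simp only [List.map_cons, List.prod_cons, list_prod_mul_distrib u v t h2]
    rw [mul_assoc (u a), ← mul_assoc (v a), hcm.eq, mul_assoc (List.map u t).prod, ← mul_assoc]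

lemma list_prod_inv_comm {α G : Type*} [Group G] (c : α → G) :
    ∀ l : List α, (l.map c).Pairwise Commute →
      (l.map fun a => (c a)⁻¹).prod = ((l.map c).prod)⁻¹
  | [], _ => by simp
  | a :: t, h => by
    have h' : (c a :: t.map c).Pairwise Commute := by simpa using h
    obtain ⟨h1, h2⟩ := List.pairwise_cons.mp h'
    have hcm : Commute (c a) ((t.map c).prod) := Commute.list_prod_right _ _ h1
    simp only [List.map_cons, List.prod_cons, list_prod_inv_comm c t h2, mul_inv_rev]
    rw [hcm.inv_right.inv_left.eq]

lemma list_prod_interchange {α β M : Type*} [Monoid M] (f : α → β → M)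
    (hc : ∀ a b a' b', Commute (f a b) (f a' b')) :
    ∀ (l₁ : List α) (l₂ : List β),
      (l₁.map fun a => (l₂.map fun b => f a b).prod).prod
        = (l₂.map fun b => (l₁.map fun a => f a b).prod).prod
  | [], l₂ => by
    simp only [List.map_nil, List.prod_nil]
    exact (List.prod_eq_one (by simp)).symm
  | a :: t, l₂ => by
    have ih := list_prod_interchange f hc t l₂
    have hd := list_prod_mul_distrib (fun b => f a b)
      (fun b => (t.map fun a' => f a' b).prod) l₂
      (pairwise_of_forall_rel (fun b b' => by
        refine (Commute.list_prod_right _ _ ?_).symm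
        intro x hx
        obtain ⟨a', _, rfl⟩ := List.mem_map.mp hx
        exact hc a b' a' b) l₂)
    simp only [List.map_cons, List.prod_cons, ih]
    rw [← hd]

lemma list_prod_extract {α M : Type*} [Monoid M] [DecidableEq α] (c : α → M) {l : List α}
    (hl : (l.map c).Pairwise Commute) {a : α} (ha : a ∈ l) :
    (l.map c).prod = c a * ((l.erase a).map c).prod := by
  have hp : (l.map c).Perm ((a :: l.erase a).map c) := (List.perm_cons_erase ha).map c
  rw [hp.prod_eq' hl, List.map_cons, List.prod_cons]

/-- The subgroup of fixed points of an action `φ : R →* MulAut G`. -/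
def fixedSubgroup {R G : Type*} [Group R] [Group G] (φ : R →* MulAut G) : Subgroup G where
  carrier := {g | ∀ r : R, φ r g = g}
  one_mem' := by intro r; simp
  mul_mem' := by intro a b ha hb r; simp [map_mul, ha r, hb r]
  inv_mem' := by intro a ha r; simp [ha r]

theorem stmt0 {R G : Type*} [Group R] [Group G] [Finite R] [Finite G]
    (φ : R →* MulAut G) (n : ℕ) (Gs : Fin n → Subgroup G)
    (hperf : ∀ i, ⁅Gs i, Gs i⁆ = Gs i)
    (hcomm : ∀ i j, i ≠ j → ∀ x ∈ Gs i, ∀ y ∈ Gs j, Commute x y)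
    (hgen : (⨆ i, Gs i) = ⊤)
    (hperm : ∀ (r : R) (i : Fin n), ∃ j, (Gs i).map (φ r).toMonoidHom = Gs j)
    (hsemireg : ∀ r : R, r ≠ 1 → ∀ i, (Gs i).map (φ r).toMonoidHom ≠ Gs i)
    (hcop : Nat.Coprime (Nat.card R) (Nat.card G)) :
    ⁅fixedSubgroup φ, fixedSubgroup φ⁆ = fixedSubgroup φ := by
  classical
  have _inst : Fintype R := Fintype.ofFinite R
  refine le_antisymm (Subgroup.commutator_le.mpr ?_) ?_
  · intro p hp q hq
    intro r
    show φ r ⁅p, q⁆ = ⁅p, q⁆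
    have hp' : φ r p = p := hp r
    have hq' : φ r q = q := hq r
    simp [commutatorElement_def, map_mul, map_inv, hp', hq']
  -- hard direction
  choose σ hσ using hperm
  have F1 : ∀ (r : R) {i : Fin n} {x : G}, x ∈ Gs i → φ r x ∈ Gs (σ r i) := by
    intro r i x hx
    exact hσ r i ▸ Subgroup.mem_map.mpr ⟨x, hx, rfl⟩
  have hφcomp : ∀ r s : R,
      (φ r).toMonoidHom.comp (φ s).toMonoidHom = (φ (r * s)).toMonoidHom := by
    intro r s
    ext x
    simp [map_mul]
  have hmapmul : ∀ (r s : R) (i : Fin n),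
      (Gs i).map (φ (r * s)).toMonoidHom
        = ((Gs i).map (φ s).toMonoidHom).map (φ r).toMonoidHom := by
    intro r s i
    rw [Subgroup.map_map, hφcomp]
  have hmapone : ∀ i : Fin n, (Gs i).map (φ (1 : R)).toMonoidHom = Gs i := by
    intro i
    have h1 : (φ (1 : R)).toMonoidHom = MonoidHom.id G := by
      ext x
      simp
    rw [h1, Subgroup.map_id]
  have F2 : ∀ {r s : R}, r ≠ s → ∀ i, σ r i ≠ σ s i := by
    intro r s hrs i he
    have h1 : (Gs i).map (φ r).toMonoidHom = (Gs i).map (φ s).toMonoidHom := by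
      rw [hσ, hσ, he]
    have h2 : (Gs i).map (φ (s⁻¹ * r)).toMonoidHom = Gs i := by
      rw [hmapmul s⁻¹ r i, h1, ← hmapmul s⁻¹ s i, inv_mul_cancel, hmapone]
    exact hsemireg (s⁻¹ * r) (fun h => hrs (by rwa [inv_mul_eq_one, eq_comm] at h)) i h2
  have inj : ∀ r₀ : R, r₀ ≠ 1 → Function.Injective Gs := by
    intro r₀ hr₀ i j hij
    by_contra hne
    have habel : ∀ x ∈ Gs i, ∀ y ∈ Gs i, Commute x y := fun x hx y hy =>
      hcomm i j hne x hx y (hij ▸ hy)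
    have hle : ⁅Gs i, Gs i⁆ ≤ ⊥ := Subgroup.commutator_le.mpr fun a ha b hb => by
      simp [Subgroup.mem_bot, commutatorElement_eq_one_iff_commute.mpr (habel a ha b hb)]
    have hbot : Gs i = ⊥ := le_bot_iff.mp ((hperf i) ▸ hle)
    exact hsemireg r₀ hr₀ i (by rw [hbot, Subgroup.map_bot])
  have hbij : ∀ r₀ : R, r₀ ≠ 1 → ∀ r : R, Function.Bijective (σ r) := by
    intro r₀ hr₀ r
    refine Finite.injective_iff_bijective.mp ?_
    intro i j hij
    apply inj r₀ hr₀
    have h1 : (Gs i).map (φ r).toMonoidHom = (Gs j).map (φ r).toMonoidHom := by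
      rw [hσ, hσ, hij]
    exact Subgroup.map_injective (φ r).injective h1
  have genpair : ∀ (c : Fin n → G), (∀ i, c i ∈ Gs i) →
      ((List.finRange n).map c).Pairwise Commute := by
    intro c hc
    exact List.Pairwise.map c (fun i j hij => hcomm i j hij _ (hc i) _ (hc j))
      (List.nodup_finRange n)
  have K1 : ∀ gg : G, ∃ c : Fin n → G, (∀ i, c i ∈ Gs i) ∧
      gg = ((List.finRange n).map c).prod := by
    intro gg
    have hgg : gg ∈ ⨆ i, Gs i := by rw [hgen]; exact Subgroup.mem_top gg
    refine Subgroup.iSup_induction Gs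
      (C := fun gg => ∃ c : Fin n → G, (∀ i, c i ∈ Gs i) ∧
        gg = ((List.finRange n).map c).prod) hgg ?_ ?_ ?_
    · intro i x hx
      refine ⟨fun j => if j = i then x else 1, ?_, ?_⟩
      · intro j
        by_cases h : j = i
        · subst h; simp [hx]
        · simpa [h] using one_mem (Gs j)
      · have hcmem : ∀ j, (if j = i then x else 1) ∈ Gs j := by
          intro j
          by_cases h : j = i
          · subst h; simp [hx]
          · simpa [h] using one_mem (Gs j)
        rw [list_prod_extract _ (genpair _ hcmem) (List.mem_finRange i)]
        have hrest : (((List.finRange n).erase i).map fun j => if j = i then x else 1).prod = 1 := by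
          refine List.prod_eq_one ?_
          intro y hy
          obtain ⟨j, hj, rfl⟩ := List.mem_map.mp hy
          have hji : j ≠ i := by
            rintro rfl
            exact (List.Nodup.not_mem_erase (List.nodup_finRange n)) hj
          simp [hji]
        rw [hrest]
        simp
    · exact ⟨fun _ => 1, fun i => one_mem _, by
        refine (List.prod_eq_one ?_).symm
        intro y hy
        obtain ⟨j, _, rfl⟩ := List.mem_map.mp hy
        rfl⟩
    · rintro x y ⟨cx, hcx, hx⟩ ⟨cy, hcy, hy⟩
      subst hx; subst hy
      refine ⟨fun i => cx i * cy i, fun i => mul_mem (hcx i) (hcy i), ?_⟩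
      refine (list_prod_mul_distrib cx cy _ ?_).symm
      exact List.Pairwise.imp (fun {a b} hab => hcomm a b hab _ (hcy a) _ (hcx b))
        (List.nodup_finRange n)
  have K2 : ∀ (x y : Fin n → G), (∀ i, x i ∈ Gs i) → (∀ i, y i ∈ Gs i) →
      ((List.finRange n).map x).prod = ((List.finRange n).map y).prod →
      ∀ k, (y k)⁻¹ * x k ∈ Subgroup.center G := by
    intro x y hx hy hxy k
    have Acomm : ∀ (z : Fin n → G), (∀ i, z i ∈ Gs i) → ∀ w ∈ Gs k,
        Commute ((((List.finRange n).erase k).map z).prod) w := by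
      intro z hz w hw
      refine (Commute.list_prod_right _ _ ?_).symm
      intro u hu
      obtain ⟨j, hj, rfl⟩ := List.mem_map.mp hu
      have hjk : j ≠ k := by
        rintro rfl
        exact (List.Nodup.not_mem_erase (List.nodup_finRange n)) hj
      exact (hcomm j k hjk _ (hz j) _ hw).symm
    have hex : ((List.finRange n).map x).prod
        = x k * (((List.finRange n).erase k).map x).prod :=
      list_prod_extract x (genpair x hx) (List.mem_finRange k)
    have hey : ((List.finRange n).map y).prod
        = y k * (((List.finRange n).erase k).map y).prod :=
      list_prod_extract y (genpair y hy) (List.mem_finRange k)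
    have h3 : x k * (((List.finRange n).erase k).map x).prod
        = y k * (((List.finRange n).erase k).map y).prod := by
      rw [← hex, ← hey, hxy]
    have ht : (y k)⁻¹ * x k
        = (((List.finRange n).erase k).map y).prod
          * ((((List.finRange n).erase k).map x).prod)⁻¹ := by
      calc (y k)⁻¹ * x k
          = (y k)⁻¹ * (x k * (((List.finRange n).erase k).map x).prod)
            * ((((List.finRange n).erase k).map x).prod)⁻¹ := by group
        _ = (y k)⁻¹ * (y k * (((List.finRange n).erase k).map y).prod)
            * ((((List.finRange n).erase k).map x).prod)⁻¹ := by rw [h3]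
        _ = (((List.finRange n).erase k).map y).prod
            * ((((List.finRange n).erase k).map x).prod)⁻¹ := by group
    refine Subgroup.mem_center_iff.mpr ?_
    intro w
    have hw : w ∈ ⨆ i, Gs i := by rw [hgen]; exact Subgroup.mem_top w
    refine Subgroup.iSup_induction Gs
      (C := fun w => w * ((y k)⁻¹ * x k) = ((y k)⁻¹ * x k) * w) hw ?_ (by simp) ?_
    · intro j w hwj
      by_cases hjk : j = k
      · rw [hjk] at hwj
        rw [ht]
        have c1 : Commute w ((((List.finRange n).erase k).map y).prod) :=
          (Acomm y hy w hwj).symm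
        have c2 : Commute w (((((List.finRange n).erase k).map x).prod)⁻¹) :=
          (Acomm x hx w hwj).symm.inv_right
        exact (c1.mul_right c2).eq
      · have htk : (y k)⁻¹ * x k ∈ Gs k := mul_mem (inv_mem (hy k)) (hx k)
        exact (hcomm j k hjk w hwj _ htk).eq
    · intro a b ha hb
      rw [mul_assoc, hb, ← mul_assoc, ha, mul_assoc]
  -- the list of all elements of R
  set ρ : List R := (Finset.univ : Finset R).toList with hρdef
  have hρnd : ρ.Nodup := Finset.nodup_toList _
  have hρmem : ∀ r : R, r ∈ ρ := fun r => Finset.mem_toList.mpr (Finset.mem_univ r)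
  have M1 : ∀ (r s : R), r ≠ s → ∀ (i : Fin n) (x y : G), x ∈ Gs i → y ∈ Gs i →
      Commute (φ r x) (φ s y) := by
    intro r s hrs i x y hx hy
    exact hcomm (σ r i) (σ s i) (F2 hrs i) _ (F1 r hx) _ (F1 s hy)
  have ddpair : ∀ (i : Fin n) (x : G), x ∈ Gs i →
      (ρ.map fun r => φ r x).Pairwise Commute := by
    intro i x hx
    exact List.Pairwise.map _ (fun a b hab => M1 a b hab i x x hx hx) hρnd
  have dd_mul : ∀ (i : Fin n) (x y : G), x ∈ Gs i → y ∈ Gs i →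
      (ρ.map fun r => φ r (x * y)).prod
        = (ρ.map fun r => φ r x).prod * (ρ.map fun r => φ r y).prod := by
    intro i x y hx hy
    have h1 : (ρ.map fun r => φ r (x * y)) = ρ.map fun r => φ r x * φ r y := by
      refine List.map_congr_left ?_
      intro r _
      exact map_mul (φ r) x y
    rw [h1]
    exact list_prod_mul_distrib (fun r => φ r x) (fun r => φ r y) ρ
      (List.Pairwise.imp (fun {a b} hab => M1 a b hab i y x hy hx) hρnd)
  have dd_inv : ∀ (i : Fin n) (x : G), x ∈ Gs i →
      (ρ.map fun r => φ r x⁻¹).prod = ((ρ.map fun r => φ r x).prod)⁻¹ := by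
    intro i x hx
    have h1 : (ρ.map fun r => φ r x⁻¹) = ρ.map fun r => (φ r x)⁻¹ := by
      refine List.map_congr_left ?_
      intro r _
      exact map_inv (φ r) x
    rw [h1]
    exact list_prod_inv_comm (fun r => φ r x) ρ (ddpair i x hx)
  have dd_one : (ρ.map fun r => φ r (1 : G)).prod = 1 := by
    refine List.prod_eq_one ?_
    intro u hu
    obtain ⟨r, _, rfl⟩ := List.mem_map.mp hu
    exact map_one (φ r)
  have dd_memC : ∀ (i : Fin n) (x : G), x ∈ Gs i →
      (ρ.map fun r => φ r x).prod ∈ fixedSubgroup φ := by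
    intro i x hx
    intro s
    show φ s ((ρ.map fun r => φ r x).prod) = (ρ.map fun r => φ r x).prod
    have h1 : φ s ((ρ.map fun r => φ r x).prod)
        = ((ρ.map fun r => φ r x).map (φ s)).prod := map_list_prod (φ s).toMonoidHom _
    have h2 : ((ρ.map fun r => φ r x).map (φ s)) = (ρ.map fun r => s * r).map fun r => φ r x := by
      rw [List.map_map, List.map_map]
      refine List.map_congr_left ?_
      intro r _
      show φ s (φ r x) = φ (s * r) x
      rw [map_mul]
      rfl
    have hpm : (ρ.map fun r => s * r).Perm ρ := by
      refine List.perm_of_nodup_nodup_toFinset_eq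
        (hρnd.map (fun a b hab => by simpa using hab)) hρnd ?_
      ext u
      simp only [List.mem_toFinset, List.mem_map]
      constructor
      · intro _; exact hρmem u
      · intro _; exact ⟨s⁻¹ * u, hρmem _, by group⟩
    have hpc : ((ρ.map fun r => s * r).map fun r => φ r x).Pairwise Commute := by
      refine List.Pairwise.map _ (fun a b hab => M1 a b hab i x x hx hx) ?_
      exact hρnd.map (fun a b hab => by simpa using hab)
    rw [h1, h2, (hpm.map fun r => φ r x).prod_eq' hpc]
  have dmem : ∀ (i : Fin n) (x : G), x ∈ Gs i →
      (ρ.map fun r => φ r x).prod ∈ ⁅fixedSubgroup φ, fixedSubgroup φ⁆ := by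
    intro i x hx
    have hx' : x ∈ Subgroup.closure {g | ∃ g₁ ∈ Gs i, ∃ g₂ ∈ Gs i, ⁅g₁, g₂⁆ = g} := by
      rw [← Subgroup.commutator_def, hperf i]
      exact hx
    refine (Subgroup.closure_induction
      (p := fun z _ => z ∈ Gs i ∧ (ρ.map fun r => φ r z).prod ∈ ⁅fixedSubgroup φ, fixedSubgroup φ⁆)
      ?_ ?_ ?_ ?_ hx').2
    · rintro z ⟨a, ha, b, hb, rfl⟩
      have hzmem : ⁅a, b⁆ ∈ Gs i := by
        rw [← hperf i]
        exact Subgroup.commutator_mem_commutator ha hb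
      refine ⟨hzmem, ?_⟩
      have hab : a * b ∈ Gs i := mul_mem ha hb
      have habi : a * b * a⁻¹ ∈ Gs i := mul_mem hab (inv_mem ha)
      have hkey : (ρ.map fun r => φ r ⁅a, b⁆).prod
          = ⁅(ρ.map fun r => φ r a).prod, (ρ.map fun r => φ r b).prod⁆ := by
        rw [commutatorElement_def a b]
        rw [dd_mul i _ _ habi (inv_mem hb), dd_mul i _ _ hab (inv_mem ha),
          dd_mul i _ _ ha hb, dd_inv i _ ha, dd_inv i _ hb]
        rw [commutatorElement_def]
      rw [hkey]
      exact Subgroup.commutator_mem_commutator (dd_memC i a ha) (dd_memC i b hb)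
    · exact ⟨one_mem _, by rw [dd_one]; exact one_mem _⟩
    · rintro z w _ _ ⟨hz1, hz2⟩ ⟨hw1, hw2⟩
      exact ⟨mul_mem hz1 hw1, by rw [dd_mul i _ _ hz1 hw1]; exact mul_mem hz2 hw2⟩
    · rintro z _ ⟨hz1, hz2⟩
      exact ⟨inv_mem hz1, by rw [dd_inv i _ hz1]; exact inv_mem hz2⟩
  -- main argument
  intro g hg
  obtain ⟨c, hc0, hcP⟩ := K1 g
  have hgfix : ∀ r : R, φ r g = g := hg
  have hmapg : ∀ r : R, φ r g = ((List.finRange n).map fun i => φ r (c i)).prod := by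
    intro r
    have h1 : φ r (((List.finRange n).map c).prod)
        = (((List.finRange n).map c).map (φ r)).prod := map_list_prod (φ r).toMonoidHom _
    rw [hcP, h1, List.map_map]
    rfl
  have M2 : ∀ (r : R) (i : Fin n) (s : R) (j : Fin n),
      Commute (φ r (c i)) (φ s (c j)) := by
    intro r i s j
    rcases eq_or_ne r s with rfl | hrs
    · rcases eq_or_ne i j with rfl | hij
      · exact Commute.refl _
      · exact (hcomm i j hij _ (hc0 i) _ (hc0 j)).map (φ r).toMonoidHom
    · have hr0 : (s⁻¹ * r : R) ≠ 1 := fun h => hrs (by rwa [inv_mul_eq_one, eq_comm] at h)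
      have hz : ∀ (t : R) (i' : Fin n),
          (c (σ t i'))⁻¹ * φ t (c i') ∈ Subgroup.center G := by
        intro t i'
        have hbij' : Function.Bijective (σ t) := hbij _ hr0 t
        set e := Equiv.ofBijective (σ t) hbij' with he
        have hc2mem : ∀ k, φ t (c (e.symm k)) ∈ Gs k := by
          intro k
          have h1 := F1 t (hc0 (e.symm k))
          have hek : σ t (e.symm k) = k := e.apply_symm_apply k
          rwa [hek] at h1
        have hPc2 : ((List.finRange n).map fun k => φ t (c (e.symm k))).prod
            = ((List.finRange n).map c).prod := by
          have hmm : ((List.finRange n).map fun k => φ t (c (e.symm k)))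
              = ((List.finRange n).map e.symm).map fun i'' => φ t (c i'') := by
            rw [List.map_map]
            rfl
          have hnd2 : ((List.finRange n).map ⇑e.symm).Nodup :=
            (List.nodup_finRange n).map e.symm.injective
          have hpm : ((List.finRange n).map ⇑e.symm).Perm (List.finRange n) := by
            refine List.perm_of_nodup_nodup_toFinset_eq hnd2 (List.nodup_finRange n) ?_
            ext u
            simp only [List.mem_toFinset, List.mem_map]
            constructor
            · intro _; exact List.mem_finRange u
            · intro _; exact ⟨e u, List.mem_finRange _, e.symm_apply_apply u⟩
          have hpc : (((List.finRange n).map ⇑e.symm).map fun i'' => φ t (c i'')).Pairwise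
              Commute := by
            refine List.Pairwise.map _
              (fun a b hab => (hcomm a b hab _ (hc0 a) _ (hc0 b)).map (φ t).toMonoidHom) hnd2
          rw [hmm, (hpm.map fun i'' => φ t (c i'')).prod_eq' hpc]
          rw [← hmapg t, hgfix t, hcP]
        have hK := K2 _ c hc2mem hc0 hPc2 (σ t i')
        have hsy : e.symm (σ t i') = i' := e.symm_apply_apply i'
        rwa [hsy] at hK
      have h1 : φ r (c i) = c (σ r i) * ((c (σ r i))⁻¹ * φ r (c i)) :=
        (mul_inv_cancel_left _ _).symm
      have h2 : φ s (c j) = c (σ s j) * ((c (σ s j))⁻¹ * φ s (c j)) :=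
        (mul_inv_cancel_left _ _).symm
      rw [h1, h2]
      have hcz : ∀ z ∈ Subgroup.center G, ∀ w : G, Commute z w :=
        fun z hzc w => (Subgroup.mem_center_iff.mp hzc w).symm
      have hcc : Commute (c (σ r i)) (c (σ s j)) := by
        rcases eq_or_ne (σ r i) (σ s j) with heq | hne
        · rw [heq]
        · exact hcomm _ _ hne _ (hc0 _) _ (hc0 _)
      have hA : Commute (c (σ r i)) (c (σ s j) * ((c (σ s j))⁻¹ * φ s (c j))) :=
        hcc.mul_right (hcz _ (hz s j) _).symm
      have hB : Commute ((c (σ r i))⁻¹ * φ r (c i))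
          (c (σ s j) * ((c (σ s j))⁻¹ * φ s (c j))) := hcz _ (hz r i) _
      exact hA.mul_left hB
  have hkey : g ^ ρ.length ∈ ⁅fixedSubgroup φ, fixedSubgroup φ⁆ := by
    have hconst : g ^ ρ.length = (ρ.map fun _ => g).prod := by
      rw [List.map_const', List.prod_replicate]
    have hstep : g ^ ρ.length
        = (ρ.map fun r => ((List.finRange n).map fun i => φ r (c i)).prod).prod := by
      rw [hconst]
      congr 1
      refine List.map_congr_left ?_
      intro r _
      rw [← hmapg r, hgfix r]
    rw [hstep, list_prod_interchange (fun r i => φ r (c i))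
      (fun a b a' b' => M2 a b a' b') ρ (List.finRange n)]
    refine Subgroup.list_prod_mem _ ?_
    intro u hu
    obtain ⟨i, _, rfl⟩ := List.mem_map.mp hu
    exact dmem i (c i) (hc0 i)
  rcases eq_or_ne g 1 with rfl | hg1
  · exact one_mem _
  have hlen : ρ.length = Nat.card R := by
    rw [hρdef, Finset.length_toList, Nat.card_eq_fintype_card, Finset.card_univ]
  have hco : Nat.Coprime (Nat.card R) (orderOf g) :=
    Nat.Coprime.coprime_dvd_right (orderOf_dvd_natCard g) hcop
  have hordgt : 1 < orderOf g := by
    have h0 : orderOf g ≠ 0 := (orderOf_pos g).ne'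
    have h1 : orderOf g ≠ 1 := fun h => hg1 (orderOf_eq_one_iff.mp h)
    omega
  obtain ⟨k, -, hk⟩ := Nat.exists_mul_mod_eq_one_of_coprime hco hordgt
  have hgk : g = (g ^ ρ.length) ^ k := by
    rw [← pow_mul, hlen, ← pow_mod_orderOf, hk, pow_one]
  rw [hgk]
  exact pow_mem hkey k
end

section
/- If G is a perfect group such that the quotient G/Z(G) is a finite group of order coprime to a prime r, then G itself is a finite group of order coprime to r. -/
open Subgroup
open scoped commutatorElement
open scoped IsMulCommutative

lemma commutator_center_aux {G : Type*} [Group G] (g h z w : G)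
    (hz : z ∈ Subgroup.center G) (hw : w ∈ Subgroup.center G) :
    ⁅g * z, h * w⁆ = ⁅g, h⁆ := by
  have hz' : ∀ a : G, Commute z a := fun a => (Subgroup.mem_center_iff.mp hz a).symm
  have hw' : ∀ a : G, Commute w a := fun a => (Subgroup.mem_center_iff.mp hw a).symm
  simp only [commutatorElement_def, mul_inv_rev]
  calc g * z * (h * w) * (z⁻¹ * g⁻¹) * (w⁻¹ * h⁻¹)
      = g * (z * (h * w) * z⁻¹) * g⁻¹ * (w⁻¹ * h⁻¹) := by group
    _ = g * (h * w) * g⁻¹ * (w⁻¹ * h⁻¹) := by rw [(hz' (h*w)).eq, mul_inv_cancel_right]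
    _ = g * h * (w * g⁻¹ * w⁻¹) * h⁻¹ := by group
    _ = g * h * g⁻¹ * h⁻¹ := by rw [(hw' g⁻¹).eq, mul_inv_cancel_right]

lemma finite_commutatorSet_of_finite_quotient_center {G : Type*} [Group G]
    [Finite (G ⧸ Subgroup.center G)] : Finite (commutatorSet G) := by
  let f : (G ⧸ Subgroup.center G) × (G ⧸ Subgroup.center G) → G := fun p =>
    ⁅Quotient.out p.1, Quotient.out p.2⁆
  have hsub : commutatorSet G ⊆ Set.range f := by
    rintro _ ⟨g, h, rfl⟩
    refine ⟨(QuotientGroup.mk g, QuotientGroup.mk h), ?_⟩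
    have hgq : (QuotientGroup.mk (Quotient.out (QuotientGroup.mk g : G ⧸ Subgroup.center G))
        : G ⧸ Subgroup.center G) = QuotientGroup.mk g := QuotientGroup.out_eq' _
    have hhq : (QuotientGroup.mk (Quotient.out (QuotientGroup.mk h : G ⧸ Subgroup.center G))
        : G ⧸ Subgroup.center G) = QuotientGroup.mk h := QuotientGroup.out_eq' _
    have hz : g⁻¹ * Quotient.out (QuotientGroup.mk g : G ⧸ Subgroup.center G) ∈
        Subgroup.center G := (QuotientGroup.eq ).mp hgq.symm
    have hw : h⁻¹ * Quotient.out (QuotientGroup.mk h : G ⧸ Subgroup.center G) ∈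
        Subgroup.center G := (QuotientGroup.eq).mp hhq.symm
    have hgz : Quotient.out (QuotientGroup.mk g : G ⧸ Subgroup.center G)
        = g * (g⁻¹ * Quotient.out (QuotientGroup.mk g : G ⧸ Subgroup.center G)) := by group
    have hhw : Quotient.out (QuotientGroup.mk h : G ⧸ Subgroup.center G)
        = h * (h⁻¹ * Quotient.out (QuotientGroup.mk h : G ⧸ Subgroup.center G)) := by group
    show f (QuotientGroup.mk g, QuotientGroup.mk h) = ⁅g, h⁆
    simp only [f]
    rw [hgz, hhw]
    exact commutator_center_aux g h _ _ hz hw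
  exact Finite.Set.subset _ hsub

theorem stmt1 {G : Type*} [Group G] (r : ℕ) (hr : r.Prime)
    (hperf : commutator G = ⊤)
    (hfin : Finite (G ⧸ Subgroup.center G))
    (hcop : Nat.Coprime (Nat.card (G ⧸ Subgroup.center G)) r) :
    Finite G ∧ Nat.Coprime (Nat.card G) r := by
  have hcs : Finite (commutatorSet G) := finite_commutatorSet_of_finite_quotient_center
  have hcomm : Finite (commutator G) := inferInstance
  have hG : Finite G := by
    rw [hperf] at hcomm
    exact Finite.of_equiv _ Subgroup.topEquiv.toEquiv
  refine ⟨hG, ?_⟩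
  have : Fintype G := Fintype.ofFinite G
  have hidx : (Subgroup.center G).FiniteIndex := by
    constructor
    have : Nat.card (G ⧸ Subgroup.center G) ≠ 0 := Nat.card_ne_zero.mpr ⟨⟨1⟩, hfin⟩
    simpa [Subgroup.index] using this
  have hidx_eq : (Subgroup.center G).index = Nat.card (G ⧸ Subgroup.center G) := rfl
  have htriv : ∀ g : G, g ^ (Subgroup.center G).index = 1 := by
    intro g
    have hk : commutator G ≤ (MonoidHom.transferCenterPow G).ker :=
      Abelianization.commutator_subset_ker _
    rw [hperf, top_le_iff] at hk
    have hker : MonoidHom.transferCenterPow G g = 1 := by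
      rw [← MonoidHom.mem_ker, hk]; trivial
    have := congrArg (Subtype.val) hker
    rwa [MonoidHom.transferCenterPow_apply] at this
  haveI : Fact r.Prime := ⟨hr⟩
  rw [Nat.coprime_comm]
  rw [hr.coprime_iff_not_dvd]
  intro hdvd
  rw [Nat.card_eq_fintype_card] at hdvd
  obtain ⟨g, hg⟩ := exists_prime_orderOf_dvd_card r hdvd
  have hord : orderOf g ∣ (Subgroup.center G).index := orderOf_dvd_of_pow_eq_one (htriv g)
  rw [hg, hidx_eq] at hord
  have : r = 1 := Nat.eq_one_of_dvd_coprimes hcop.symm (dvd_refl r) hord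
  exact hr.one_lt.ne' this
end

section
/- Let R be a finite group acting on a finite group G with gcd(|R|,|G|) = 1, and suppose G = G₁ × ⋯ × Gₙ is a direct product of subgroups permuted by R. Then the natural projection from the fixed points of R on the external direct product to G maps C onto C_G(R); in particular, if R permutes the factors semiregularly, C_G(R) is isomorphic to the direct product of the diagonal subgroups over the R-orbits. -/
namespace Stmt2Aux

theorem perm_apply_inv_self {α : Type*} (f : Equiv.Perm α) (x : α) : f (f⁻¹ x) = x :=
  Equiv.apply_symm_apply f x

theorem perm_inv_apply_self {α : Type*} (f : Equiv.Perm α) (x : α) : f⁻¹ (f x) = x :=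
  Equiv.symm_apply_apply f x

variable {R G : Type*} [Group R] [Group G]

/-- The coordinate-permuting automorphism of the external product induced by `φ r`. -/
def permHom (φ : R →* MulAut G) {n : ℕ} (Gs : Fin n → Subgroup G)
    (σ : R →* Equiv.Perm (Fin n))
    (hperm : ∀ (r : R) (i : Fin n), (Gs i).map (φ r).toMonoidHom = Gs (σ r i)) (r : R) :
    (∀ i, Gs i) →* (∀ i, Gs i) where
  toFun f j := ⟨φ r ((f ((σ r)⁻¹ j) : G)), by
    have h := hperm r ((σ r)⁻¹ j)
    rw [Stmt2Aux.perm_apply_inv_self] at h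
    rw [← h]
    exact ⟨_, (f ((σ r)⁻¹ j)).2, rfl⟩⟩
  map_one' := by
    funext j
    apply Subtype.ext
    simp
  map_mul' f g := by
    funext j
    apply Subtype.ext
    simp

theorem permHom_apply_coe (φ : R →* MulAut G) {n : ℕ} (Gs : Fin n → Subgroup G)
    (σ : R →* Equiv.Perm (Fin n)) (hperm) (r : R) (f : ∀ i, Gs i) (j : Fin n) :
    ((permHom φ Gs σ hperm r f j : G)) = φ r ((f ((σ r)⁻¹ j) : G)) := rfl

theorem permHom_key (φ : R →* MulAut G) {n : ℕ} (Gs : Fin n → Subgroup G)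
    (hcomm : Pairwise fun i j => ∀ (x : (Gs i)) (y : (Gs j)),
      Commute ((Gs i).subtype x) ((Gs j).subtype y))
    (σ : R →* Equiv.Perm (Fin n))
    (hperm : ∀ (r : R) (i : Fin n), (Gs i).map (φ r).toMonoidHom = Gs (σ r i))
    (r : R) (f : ∀ i, Gs i) :
    MonoidHom.noncommPiCoprod (fun i => (Gs i).subtype) hcomm (permHom φ Gs σ hperm r f)
      = φ r (MonoidHom.noncommPiCoprod (fun i => (Gs i).subtype) hcomm f) := by
  classical
  have key : (MonoidHom.noncommPiCoprod (fun i => (Gs i).subtype) hcomm).comp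
        (permHom φ Gs σ hperm r)
      = (φ r).toMonoidHom.comp (MonoidHom.noncommPiCoprod (fun i => (Gs i).subtype) hcomm) := by
    apply MonoidHom.pi_ext
    intro i y
    simp only [MonoidHom.comp_apply]
    have h1 : permHom φ Gs σ hperm r (Pi.mulSingle i y)
        = Pi.mulSingle (σ r i)
            (⟨φ r (y : G), by rw [← hperm r i]; exact ⟨_, y.2, rfl⟩⟩ : Gs (σ r i)) := by
      funext j
      apply Subtype.ext
      by_cases hj : j = σ r i
      · subst hj
        rw [permHom_apply_coe]
        rw [Stmt2Aux.perm_inv_apply_self]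
        simp
      · rw [permHom_apply_coe]
        have hne : (σ r)⁻¹ j ≠ i := by
          intro h
          apply hj
          rw [← h, Stmt2Aux.perm_apply_inv_self]
        rw [Pi.mulSingle_eq_of_ne hne, Pi.mulSingle_eq_of_ne hj]
        simp
    rw [h1, MonoidHom.noncommPiCoprod_mulSingle, MonoidHom.noncommPiCoprod_mulSingle]
    rfl
  exact DFunLike.congr_fun key f

end Stmt2Aux

theorem stmt2 {R G : Type*} [Group R] [Group G] [Finite R] [Finite G]
    (φ : R →* MulAut G) (hcop : Nat.Coprime (Nat.card R) (Nat.card G))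
    (n : ℕ) (Gs : Fin n → Subgroup G)
    (hcomm : Pairwise fun i j => ∀ (x : (Gs i)) (y : (Gs j)),
      Commute ((Gs i).subtype x) ((Gs j).subtype y))
    (hprod : Function.Bijective
      (MonoidHom.noncommPiCoprod (fun i => (Gs i).subtype) hcomm))
    (σ : R →* Equiv.Perm (Fin n))
    (hperm : ∀ (r : R) (i : Fin n), (Gs i).map (φ r).toMonoidHom = Gs (σ r i)) :
    (∀ g ∈ fixedSubgroup φ, ∃ f : ∀ i, Gs i,
        MonoidHom.noncommPiCoprod (fun i => (Gs i).subtype) hcomm f = g ∧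
        ∀ (r : R) (i : Fin n), φ r ((f i : G)) = ((f (σ r i) : G))) ∧
    ((∀ r : R, r ≠ 1 → ∀ i, σ r i ≠ i) →
      letI : MulAction R (Fin n) := MulAction.compHom (Fin n) σ
      Nonempty ((fixedSubgroup φ) ≃*
        ((o : Quotient (MulAction.orbitRel R (Fin n))) → Gs o.out))) := by
  classical
  set e := MonoidHom.noncommPiCoprod (fun i => (Gs i).subtype) hcomm with he
  set E : (∀ i, Gs i) ≃* G := MulEquiv.ofBijective e hprod with hE
  have hEapp : ∀ f, E f = e f := fun f => rfl
  have hEsymm : ∀ g : G, e (E.symm g) = g := fun g => E.apply_symm_apply g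
  -- pointwise version of part 1
  have hpart1 : ∀ g : G, (∀ r : R, φ r g = g) →
      ∀ (r : R) (i : Fin n), φ r ((E.symm g i : G)) = ((E.symm g (σ r i) : G)) := by
    intro g hg r i
    have hPf : Stmt2Aux.permHom φ Gs σ hperm r (E.symm g) = E.symm g := by
      apply hprod.1
      rw [Stmt2Aux.permHom_key φ Gs hcomm σ hperm r (E.symm g)]
      rw [hEsymm, hg r]
    have h4 : φ r ((E.symm g ((σ r)⁻¹ ((σ r) i)) : G)) = ((E.symm g (σ r i) : G)) :=
      congrArg Subtype.val (congrFun hPf (σ r i))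
    rwa [Stmt2Aux.perm_inv_apply_self] at h4
  constructor
  · intro g hg
    refine ⟨E.symm g, ?_, hpart1 g hg⟩
    exact hEsymm g
  · intro hfree
    letI inst : MulAction R (Fin n) := MulAction.compHom (Fin n) σ
    have hsmul : ∀ (r : R) (i : Fin n), r • i = σ r i := fun r i => rfl
    -- uniqueness of the group element moving a point
    have huniq : ∀ (r r' : R) (i : Fin n), σ r i = σ r' i → r = r' := by
      intro r r' i h
      by_contra hne
      have h2 : r'⁻¹ * r ≠ 1 := fun h2 => hne ((inv_mul_eq_one.mp h2).symm)
      exact hfree (r'⁻¹ * r) h2 i (by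
        rw [map_mul, Equiv.Perm.mul_apply, h, map_inv, Stmt2Aux.perm_inv_apply_self])
    -- existence of an element moving the orbit representative to i
    have hexist : ∀ i : Fin n,
        ∃ r : R, σ r ((Quotient.mk (MulAction.orbitRel R (Fin n)) i).out) = i := by
      intro i
      have h := Quotient.mk_out (s := MulAction.orbitRel R (Fin n)) i
      rw [MulAction.orbitRel_apply] at h
      obtain ⟨r, hr⟩ := h
      refine ⟨r⁻¹, ?_⟩
      have hr' : σ r i = (Quotient.mk (MulAction.orbitRel R (Fin n)) i).out := hr
      rw [map_inv, ← hr', Stmt2Aux.perm_inv_apply_self]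
    -- choice of such elements
    set rep : Fin n → R := fun i => (hexist i).choose with hrep
    have hrepspec : ∀ i : Fin n,
        σ (rep i) ((Quotient.mk (MulAction.orbitRel R (Fin n)) i).out) = i :=
      fun i => (hexist i).choose_spec
    -- the forward monoid hom
    set F : fixedSubgroup φ →* ((o : Quotient (MulAction.orbitRel R (Fin n))) → Gs o.out) :=
      { toFun := fun g o => E.symm (g : G) o.out
        map_one' := by funext o; apply Subtype.ext; simp
        map_mul' := fun g h => by funext o; apply Subtype.ext; simp } with hF
    have hFapp : ∀ (g : fixedSubgroup φ) (o), ((F g o : G)) = ((E.symm (g : G) o.out : G)) :=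
      fun g o => rfl
    refine ⟨MulEquiv.ofBijective F ⟨?_, ?_⟩⟩
    · -- injectivity
      intro g g' hgg
      have hcoord : E.symm (g : G) = E.symm (g' : G) := by
        funext i
        apply Subtype.ext
        have h1 := hpart1 (g : G) g.2 (rep i) (Quotient.mk (MulAction.orbitRel R (Fin n)) i).out
        have h2 := hpart1 (g' : G) g'.2 (rep i) (Quotient.mk (MulAction.orbitRel R (Fin n)) i).out
        rw [hrepspec i] at h1 h2
        rw [← h1, ← h2]
        have := congrArg (fun x => ((x (Quotient.mk (MulAction.orbitRel R (Fin n)) i) : G))) hgg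
        simp only [hFapp] at this
        rw [this]
      apply Subtype.ext
      have := congrArg E hcoord
      rwa [E.apply_symm_apply, E.apply_symm_apply] at this
    · -- surjectivity
      intro x
      set f : ∀ i, Gs i := fun i =>
        ⟨φ (rep i) ((x (Quotient.mk (MulAction.orbitRel R (Fin n)) i) : G)), by
          have h := hperm (rep i) ((Quotient.mk (MulAction.orbitRel R (Fin n)) i).out)
          rw [hrepspec i] at h
          rw [← h]
          exact ⟨_, (x (Quotient.mk (MulAction.orbitRel R (Fin n)) i)).2, rfl⟩⟩ with hf
      have hfcoe : ∀ i : Fin n,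
          ((f i : G)) = φ (rep i) ((x (Quotient.mk (MulAction.orbitRel R (Fin n)) i) : G)) :=
        fun i => rfl
      -- mk is constant on orbits
      have hmkeq : ∀ (s : R) (j : Fin n),
          (Quotient.mk (MulAction.orbitRel R (Fin n)) ((σ s)⁻¹ j))
            = Quotient.mk (MulAction.orbitRel R (Fin n)) j := by
        intro s j
        apply Quotient.sound
        exact MulAction.orbitRel_apply.mpr ⟨s⁻¹, by show σ s⁻¹ j = (σ s)⁻¹ j; rw [map_inv]⟩
      -- f is fixed under all the permuting maps
      have hPf : ∀ s : R, Stmt2Aux.permHom φ Gs σ hperm s f = f := by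
        intro s
        funext j
        apply Subtype.ext
        rw [Stmt2Aux.permHom_apply_coe, hfcoe, hfcoe]
        set i' := (σ s)⁻¹ j with hi'
        have hq : (Quotient.mk (MulAction.orbitRel R (Fin n)) i')
            = Quotient.mk (MulAction.orbitRel R (Fin n)) j := hmkeq s j
        have hx : ((x (Quotient.mk (MulAction.orbitRel R (Fin n)) i') : G))
            = ((x (Quotient.mk (MulAction.orbitRel R (Fin n)) j) : G)) :=
          congrArg (fun o => ((x o : G))) hq
        rw [hx]
        have hcomp : φ s (φ (rep i') ((x (Quotient.mk (MulAction.orbitRel R (Fin n)) j) : G)))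
            = φ (s * rep i') ((x (Quotient.mk (MulAction.orbitRel R (Fin n)) j) : G)) := by
          rw [map_mul]; rfl
        have hout : (Quotient.mk (MulAction.orbitRel R (Fin n)) i').out
            = (Quotient.mk (MulAction.orbitRel R (Fin n)) j).out := by rw [hq]
        have hreq : s * rep i' = rep j := by
          apply huniq _ _ ((Quotient.mk (MulAction.orbitRel R (Fin n)) j).out)
          rw [hrepspec j, map_mul, Equiv.Perm.mul_apply, ← hout, hrepspec i', hi',
            Stmt2Aux.perm_apply_inv_self]
        rw [hcomp, hreq]
      have hgfix : e f ∈ fixedSubgroup φ := by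
        intro s
        rw [← Stmt2Aux.permHom_key φ Gs hcomm σ hperm s f, hPf s]
      refine ⟨⟨e f, hgfix⟩, ?_⟩
      funext o
      apply Subtype.ext
      rw [hFapp]
      have hEf : E.symm (e f) = f := by
        apply E.injective
        rw [E.apply_symm_apply]
        rfl
      rw [hEf, hfcoe]
      have hq : Quotient.mk (MulAction.orbitRel R (Fin n)) o.out = o := Quotient.out_eq o
      have hrep1 : rep o.out = 1 := by
        apply huniq (rep o.out) 1 o.out
        have h := hrepspec o.out
        rw [hq] at h
        rw [h, map_one, Equiv.Perm.one_apply]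
      rw [hrep1, map_one]
      have hx : ((x (Quotient.mk (MulAction.orbitRel R (Fin n)) o.out) : G)) = ((x o : G)) :=
        congrArg (fun o' => ((x o' : G))) hq
      rw [MulAut.one_apply, hx]
end

section
/- Let r be a prime, A an elementary abelian r-group acting on a finite r'-group G that is a direct product of nonabelian simple subgroups K₁,…,Kₙ permuted transitively by A, with C_A(G) = ⟨a₀⟩ of order r. If the Sylow r-subgroups of Aut(K₁) are cyclic, then the kernel A_∞ = ker(A → Sym({K₁,…,Kₙ})) has order at most r². -/
theorem stmt5 {A G : Type*} [CommGroup A] [Group G] [Finite G]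
    (r : ℕ) (hr : r.Prime) (hA : ∀ x : A, x ^ r = 1)
    (hG : ¬ r ∣ Nat.card G)
    (φ : A →* MulAut G) (n : ℕ) (hn : 0 < n) (Ks : Fin n → Subgroup G)
    (hsimple : ∀ i, IsSimpleGroup (Ks i))
    (hnonab : ∀ i, ¬ ∀ x y : (Ks i), x * y = y * x)
    (hcomm : Pairwise fun i j => ∀ (x : (Ks i)) (y : (Ks j)),
      Commute ((Ks i).subtype x) ((Ks j).subtype y))
    (hprod : Function.Bijective
      (MonoidHom.noncommPiCoprod (fun i => (Ks i).subtype) hcomm))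
    (hperm : ∀ (a : A) (i : Fin n), ∃ j, (Ks i).map (φ a).toMonoidHom = Ks j)
    (htrans : ∀ i j : Fin n, ∃ a : A, (Ks i).map (φ a).toMonoidHom = Ks j)
    (a₀ : A) (ha₀ : orderOf a₀ = r) (hker : φ.ker = Subgroup.zpowers a₀)
    (hsyl : ∀ P : Sylow r (MulAut (Ks ⟨0, hn⟩)), IsCyclic P) :
    Nat.card {a : A // ∀ i, (Ks i).map (φ a).toMonoidHom = Ks i} ≤ r ^ 2 := by
  classical
  set i0 : Fin n := ⟨0, hn⟩ with hi0
  -- the kernel subgroup A∞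
  have comp_id : ∀ a : A, ((φ a⁻¹).toMonoidHom.comp (φ a).toMonoidHom) = MonoidHom.id G := by
    intro a
    ext x
    simp
  let Ainf : Subgroup A :=
  { carrier := {a | ∀ i, (Ks i).map (φ a).toMonoidHom = Ks i}
    one_mem' := by
      intro i
      have : (φ 1).toMonoidHom = MonoidHom.id G := by ext x; simp
      rw [this, Subgroup.map_id]
    mul_mem' := by
      intro a b ha hb i
      have : (φ (a * b)).toMonoidHom = ((φ a).toMonoidHom).comp (φ b).toMonoidHom := by
        ext x; simp
      rw [this, ← Subgroup.map_map, hb i, ha i]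
    inv_mem' := by
      intro a ha i
      conv_lhs => rw [← ha i]
      rw [Subgroup.map_map, comp_id, Subgroup.map_id] }
  have hAinf_mem : ∀ a : A, a ∈ Ainf ↔ ∀ i, (Ks i).map (φ a).toMonoidHom = Ks i := fun _ => Iff.rfl
  -- membership preservation
  have hmemK : ∀ (a : Ainf) (i : Fin n) (x : G), x ∈ Ks i → φ (a : A) x ∈ Ks i := by
    intro a i x hx
    have h := a.2 i
    rw [← h]
    exact Subgroup.mem_map_of_mem _ hx
  -- restriction homomorphism ψ : Ainf →* MulAut K0
  let res : Ainf → MulAut (Ks i0) := fun a =>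
  { toFun := fun x => ⟨φ (a : A) x, hmemK a i0 x x.2⟩
    invFun := fun x => ⟨φ ((a : A)⁻¹) x, hmemK a⁻¹ i0 x x.2⟩
    left_inv := by
      intro x
      ext
      simp
    right_inv := by
      intro x
      ext
      simp
    map_mul' := by
      intro x y
      ext
      simp }
  let ψ : Ainf →* MulAut (Ks i0) :=
  { toFun := res
    map_one' := by
      ext x
      simp [res]
    map_mul' := by
      intro a b
      ext x
      simp [res] }
  have hψ_apply : ∀ (a : Ainf) (x : Ks i0), ((ψ a x : Ks i0) : G) = φ (a : A) (x : G) :=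
    fun _ _ => rfl
  -- kernel of ψ is contained in the kernel of φ
  have hker_sub : ∀ a : Ainf, a ∈ ψ.ker → (a : A) ∈ φ.ker := by
    intro a hψa
    rw [MonoidHom.mem_ker] at hψa
    have hfix0 : ∀ x ∈ Ks i0, φ (a : A) x = x := by
      intro x hx
      have := congrArg (fun e : MulAut (Ks i0) => ((e ⟨x, hx⟩ : Ks i0) : G)) hψa
      simpa [hψ_apply] using this
    have hfix : ∀ i, ∀ x ∈ Ks i, φ (a : A) x = x := by
      intro i x hx
      obtain ⟨b, hb⟩ := htrans i0 i
      rw [← hb] at hx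
      obtain ⟨y, hy, rfl⟩ := hx
      have comm : φ (a : A) (φ b y) = φ b (φ (a : A) y) := by
        have h1 : φ ((a : A) * b) y = φ (b * (a : A)) y := by rw [mul_comm]
        simpa [map_mul] using h1
      simp only [MulEquiv.coe_toMonoidHom]
      rw [comm, hfix0 y hy]
    -- fixed points form a subgroup containing all Ks i
    let Fix : Subgroup G :=
    { carrier := {g | φ (a : A) g = g}
      one_mem' := by simp
      mul_mem' := by
        intro x y hx hy
        simp only [Set.mem_setOf_eq, map_mul] at *
        rw [hx, hy]
      inv_mem' := by
        intro x hx
        simp only [Set.mem_setOf_eq, map_inv] at *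
        rw [hx] }
    have hsup : (⨆ i, ((Ks i).subtype).range) = ⊤ := by
      rw [← MonoidHom.noncommPiCoprod_range]
      exact MonoidHom.range_eq_top.mpr hprod.surjective
      exact hcomm
    have htop : (⊤ : Subgroup G) ≤ Fix := by
      rw [← hsup]
      refine iSup_le fun i => ?_
      rw [Subgroup.range_subtype]
      intro x hx
      exact hfix i x hx
    rw [MonoidHom.mem_ker]
    ext g
    exact htop (Subgroup.mem_top g)
  -- card of kernel ≤ r
  haveI : Finite (Subgroup.zpowers a₀) := by
    have : IsOfFinOrder a₀ := by
      rw [← orderOf_pos_iff, ha₀]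
      exact hr.pos
    exact this.finite_zpowers
  have hker_card : Nat.card ψ.ker ≤ r := by
    have hinj : Function.Injective
        (fun x : ψ.ker => (⟨((x : Ainf) : A), by
          rw [← hker]; exact hker_sub x x.2⟩ : Subgroup.zpowers a₀)) := by
      intro x y h
      have : ((x : Ainf) : A) = ((y : Ainf) : A) :=
        congrArg (fun z : Subgroup.zpowers a₀ => (z : A)) h
      exact Subtype.ext (Subtype.ext this)
    calc Nat.card ψ.ker ≤ Nat.card (Subgroup.zpowers a₀) :=
          Nat.card_le_card_of_injective _ hinj
      _ = r := by rw [Nat.card_zpowers, ha₀]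
  -- card of range ≤ r
  haveI : Finite (MulAut (Ks i0)) :=
    Finite.of_injective (fun e : MulAut (Ks i0) => (e : Ks i0 → Ks i0))
      (fun e f h => by ext x; exact congrArg (Subtype.val) (congrFun h x))
  have hpow : ∀ x : ψ.range, x ^ r = 1 := by
    rintro ⟨x, a, rfl⟩
    have har : a ^ r = 1 := by
      ext
      simpa using hA (a : A)
    have : (ψ a) ^ r = 1 := by rw [← map_pow, har, map_one]
    exact Subtype.ext this
  have hpG : IsPGroup r ψ.range := fun x => ⟨1, by rw [pow_one]; exact hpow x⟩
  haveI : Fact r.Prime := ⟨hr⟩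
  obtain ⟨P, hP⟩ := hpG.exists_le_sylow
  haveI : IsCyclic (P : Subgroup (MulAut (Ks i0))) := hsyl P
  haveI hcyc : IsCyclic ψ.range := Subgroup.isCyclic_of_le hP
  have hrange_card : Nat.card ψ.range ≤ r := by
    have hexp : Monoid.exponent ψ.range ∣ r := Monoid.exponent_dvd_of_forall_pow_eq_one hpow
    have : Nat.card ψ.range ∣ r := by rw [← IsCyclic.exponent_eq_card]; exact hexp
    exact Nat.le_of_dvd hr.pos this
  -- combine
  have h1 : Nat.card Ainf = Nat.card (Ainf ⧸ ψ.ker) * Nat.card ψ.ker :=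
    Subgroup.card_eq_card_quotient_mul_card_subgroup ψ.ker
  have h2 : Nat.card (Ainf ⧸ ψ.ker) = Nat.card ψ.range :=
    Nat.card_congr (QuotientGroup.quotientKerEquivRange ψ).toEquiv
  calc Nat.card {a : A // ∀ i, (Ks i).map (φ a).toMonoidHom = Ks i}
      = Nat.card Ainf := rfl
    _ = Nat.card ψ.range * Nat.card ψ.ker := by rw [h1, h2]
    _ ≤ r * r := Nat.mul_le_mul hrange_card hker_card
    _ = r ^ 2 := (sq r).symm
end

section
/- Let A be a finite noncyclic abelian r-group acting on a finite r'-group G. Then G is generated by the fixed-point subgroups C_G(a) as a ranges over the nonidentity elements of A; more precisely, G = ⟨C_G(a) : a ∈ A, a ≠ 1⟩. -/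
/-- The subgroup of fixed points of a single automorphism. -/
def fixedBy {G : Type*} [Group G] (e : MulAut G) : Subgroup G where
  carrier := {g | e g = g}
  one_mem' := by simp
  mul_mem' := by intro a b ha hb; simp only [Set.mem_setOf_eq] at *; simp [map_mul, ha, hb]
  inv_mem' := by intro a ha; simp only [Set.mem_setOf_eq] at *; simp [ha]

lemma mem_fixedBy {G : Type*} [Group G] {e : MulAut G} {x : G} : x ∈ fixedBy e ↔ e x = x :=
  Iff.rfl

section QuotMap

variable {A G : Type*} [Group A] [Group G] (φ : A →* MulAut G)
  (N : Subgroup G) [N.Normal] (h : ∀ (a : A) x, x ∈ N → φ a x ∈ N)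

/-- The induced action on the quotient by an invariant normal subgroup. -/
def quotMap : A →* MulAut (G ⧸ N) where
  toFun a :=
    { toFun := QuotientGroup.map N N (φ a).toMonoidHom (fun x hx => h a x hx)
      invFun := QuotientGroup.map N N (φ a⁻¹).toMonoidHom (fun x hx => h a⁻¹ x hx)
      left_inv := fun x => by
        refine QuotientGroup.induction_on x fun g => ?_
        simp [QuotientGroup.map_mk, ← MulAut.mul_apply, ← map_mul]
      right_inv := fun x => by
        refine QuotientGroup.induction_on x fun g => ?_
        simp [QuotientGroup.map_mk, ← MulAut.mul_apply, ← map_mul, -MulAut.coe_mul]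
        exact congrArg _ ((φ a).apply_symm_apply g)
      map_mul' := map_mul _ }
  map_one' := by
    ext x
    refine QuotientGroup.induction_on x fun g => ?_
    simp [QuotientGroup.map_mk]
  map_mul' a b := by
    ext x
    refine QuotientGroup.induction_on x fun g => ?_
    simp [QuotientGroup.map_mk, ← MulAut.mul_apply, ← map_mul]

@[simp] lemma quotMap_mk (a : A) (g : G) :
    quotMap φ N h a (QuotientGroup.mk g) = QuotientGroup.mk (φ a g) := rfl

end QuotMap

section SubMap

variable {A G : Type*} [Group A] [Group G] (φ : A →* MulAut G)
  (Q : Subgroup G) (h : ∀ (a : A) x, x ∈ Q → φ a x ∈ Q)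

/-- The restricted action on an invariant subgroup. -/
def subMap : A →* MulAut Q where
  toFun a :=
    { toFun := fun x => ⟨φ a x, h a x x.2⟩
      invFun := fun x => ⟨φ a⁻¹ x, h a⁻¹ x x.2⟩
      left_inv := fun x => by
        ext; simp [← MulAut.mul_apply, ← map_mul]
      right_inv := fun x => by
        ext; simp [← MulAut.mul_apply, ← map_mul, -MulAut.coe_mul]
        exact (φ a).apply_symm_apply _
      map_mul' := fun x y => by ext; simp }
  map_one' := by ext x; simp
  map_mul' a b := by ext x; simp [← MulAut.mul_apply, ← map_mul]

@[simp] lemma subMap_coe (a : A) (x : Q) : (subMap φ Q h a x : G) = φ a (x : G) := rfl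

end SubMap

section Lift

open Function

/-- Coprime lifting of fixed points through a surjective homomorphism. -/
lemma fixedBy_quot_le {G Gb : Type*} [Group G] [Finite G] [Group Gb]
    (π : G →* Gb) (hπ : Surjective π) (r : ℕ) (hr : r.Prime) [Fact r.Prime]
    (hker : ¬ r ∣ Nat.card π.ker)
    (e : MulAut G) (eb : MulAut Gb) (hcomm : ∀ x, eb (π x) = π (e x))
    (horde : ∃ k : ℕ, e ^ (r ^ k) = 1) :
    fixedBy eb ≤ (fixedBy e).map π := by
  intro xb hxb
  obtain ⟨x, rfl⟩ := hπ xb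
  -- the subgroup of automorphisms preserving the fiber over π x
  have hfix : eb (π x) = π x := hxb
  let P : Subgroup (MulAut G) :=
    { carrier := {f | ∀ y, π y = π x → π (f y) = π x}
      one_mem' := fun y hy => hy
      mul_mem' := by
        intro f g hf hg y hy
        exact hf (g y) (hg y hy)
      inv_mem' := by
        intro f hf y hy
        -- f maps the fiber bijectively onto itself
        let S := {z : G // π z = π x}
        have : Finite S := Subtype.finite
        let F : S → S := fun z => ⟨f z, hf z z.2⟩
        have hFinj : Injective F := by
          intro z₁ z₂ h12
          have := congrArg Subtype.val h12
          exact Subtype.ext (f.injective this)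
        have hFsurj : Surjective F := Finite.surjective_of_injective hFinj
        obtain ⟨z, hz⟩ := hFsurj ⟨y, hy⟩
        have : f z = y := congrArg Subtype.val hz
        have : f⁻¹ y = z := by
          rw [← this]; exact f.symm_apply_apply z
        rw [this]; exact z.2 }
  have heP : e ∈ P := by
    intro y hy
    have : π (e y) = eb (π y) := (hcomm y).symm
    rw [this, hy, hfix]
  have hZP : Subgroup.zpowers e ≤ P := Subgroup.zpowers_le.mpr heP
  -- the fiber as a finite set with an action of ⟨e⟩
  let S := {z : G // π z = π x}
  letI : MulAction (Subgroup.zpowers e) S :=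
    { smul := fun f z => ⟨(f : MulAut G) z, hZP f.2 z z.2⟩
      one_smul := fun z => rfl
      mul_smul := fun f g z => rfl }
  haveI : Finite S := Subtype.finite
  -- ⟨e⟩ is an r-group
  have hpZ : IsPGroup r (Subgroup.zpowers e) := by
    obtain ⟨k, hk⟩ := horde
    intro f
    refine ⟨k, ?_⟩
    obtain ⟨m, hm⟩ := f.2
    ext
    push_cast
    rw [← hm, ← zpow_natCast, ← zpow_mul, mul_comm, zpow_mul, zpow_natCast, hk, one_zpow]
  -- the fiber has cardinality coprime to r
  have hcS : Nat.card S = Nat.card π.ker := by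
    refine Nat.card_congr ⟨fun z => ⟨x⁻¹ * z, ?_⟩, fun k => ⟨x * k, ?_⟩, fun z => ?_, fun k => ?_⟩
    · simp [MonoidHom.mem_ker, map_mul, z.2]
    · simp [MonoidHom.mem_ker.mp k.2, map_mul]
    · simp
    · simp
  have hS : ¬ r ∣ Nat.card S := by rw [hcS]; exact hker
  obtain ⟨z, hz⟩ := hpZ.nonempty_fixed_point_of_prime_not_dvd_card S hS
  have hez : e (z : G) = z := by
    have := hz ⟨e, Subgroup.mem_zpowers e⟩
    exact congrArg Subtype.val this
  exact ⟨z, hez, z.2⟩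

end Lift

section Abelian

open Finset

lemma abelian_gen {A G : Type*} [CommGroup A] [Finite A] [CommGroup G] [Finite G]
    (r : ℕ) (hr : r.Prime) [Fact r.Prime] (hG : ¬ r ∣ Nat.card G) (φ : A →* MulAut G)
    (a b : A) (ha : a ^ r = 1) (hb : b ^ r = 1) (hb1 : b ≠ 1)
    (hab : a ∉ Subgroup.zpowers b) :
    (⨆ c ∈ {c : A | c ≠ 1}, fixedBy (φ c)) = ⊤ := by
  haveI : NeZero r := ⟨hr.ne_zero⟩
  set H := ⨆ c ∈ {c : A | c ≠ 1}, fixedBy (φ c) with hH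
  have hle : ∀ c : A, c ≠ 1 → fixedBy (φ c) ≤ H := fun c hc =>
    le_iSup₂ (f := fun (c : A) (_ : c ∈ {c : A | c ≠ 1}) => fixedBy (φ c)) c hc
  have powmod : ∀ (c : A), c ^ r = 1 → ∀ m : ℕ, c ^ (m % r) = c ^ m := by
    intro c hc m
    conv_rhs => rw [← Nat.div_add_mod m r]
    rw [pow_add, pow_mul, hc, one_pow, one_mul]
  have ha1 : a ≠ 1 := fun h => hab (h ▸ (Subgroup.one_mem _))
  have key : ∀ g : G, g ^ r ∈ H := by
    intro g
    set f : A → G := fun x => φ x g with hf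
    set F : ZMod r × ZMod r → G := fun st => f (a ^ st.1.val * b ^ st.2.val) with hF
    set Nc : A → G := fun c => ∏ j : ZMod r, f (c ^ (j.val)) with hNc
    have hNfix : ∀ c : A, c ^ r = 1 → Nc c ∈ fixedBy (φ c) := by
      intro c hc
      rw [mem_fixedBy, hNc]
      simp only [map_prod]
      have h1 : ∀ j : ZMod r, φ c (f (c ^ j.val)) = f (c ^ ((j + 1 : ZMod r)).val) := by
        intro j
        simp only [hf, ← MulAut.mul_apply, ← map_mul]
        congr 1
        rw [ZMod.val_add, ZMod.val_one, powmod c hc, pow_add, pow_one, mul_comm]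
      rw [Finset.prod_congr rfl (fun j _ => h1 j)]
      exact Fintype.prod_equiv (Equiv.addRight (1 : ZMod r)) _ _ (fun j => rfl)
    set P : G := ∏ st : ZMod r × ZMod r, F st with hP
    have hPfix : P ∈ fixedBy (φ a) := by
      rw [mem_fixedBy, hP]
      simp only [map_prod]
      have h1 : ∀ st : ZMod r × ZMod r, φ a (F st) = F (st.1 + 1, st.2) := by
        intro st
        simp only [hF, hf, ← MulAut.mul_apply, ← map_mul]
        congr 1
        rw [ZMod.val_add, ZMod.val_one, powmod a ha, pow_add, pow_one, mul_comm (a ^ _) a,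
          mul_assoc]
      rw [Finset.prod_congr rfl (fun st _ => h1 st)]
      exact Fintype.prod_equiv (Equiv.prodCongr (Equiv.addRight (1 : ZMod r)) (Equiv.refl _))
        _ _ (fun st => rfl)
    -- main identity
    have step1 : ∀ i : ZMod r, Nc (a * b ^ i.val) = ∏ j : ZMod r, F (j, i * j) := by
      intro i
      rw [hNc]
      refine Finset.prod_congr rfl (fun j _ => ?_)
      simp only [hF]
      congr 1
      rw [mul_pow, ← pow_mul, ZMod.val_mul, powmod b hb]
    have step2 : (∏ i : ZMod r, ∏ j : ZMod r, F (j, i * j))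
        = ∏ j : ZMod r, ∏ i : ZMod r, F (j, i * j) := Finset.prod_comm
    have step3 : ∀ j : ZMod r, j ≠ 0 → (∏ i : ZMod r, F (j, i * j)) = ∏ t : ZMod r, F (j, t) :=
      fun j hj => Fintype.prod_equiv (Equiv.mulRight₀ j hj) _ _ (fun i => rfl)
    have hF00 : F (0, 0) = g := by
      simp [hF, hf, ZMod.val_zero]
    have step4 : (∏ i : ZMod r, F ((0 : ZMod r), i * 0)) = g ^ r := by
      simp only [mul_zero, hF00, Finset.prod_const, Finset.card_univ, ZMod.card]
    have hNb : Nc b = ∏ t : ZMod r, F (0, t) := by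
      rw [hNc]
      refine Finset.prod_congr rfl (fun t _ => ?_)
      simp [hF]
    have hPsplit : P = (∏ t : ZMod r, F (0, t)) *
        ∏ j ∈ Finset.univ.erase (0 : ZMod r), ∏ t : ZMod r, F (j, t) := by
      rw [hP, Fintype.prod_prod_type]
      rw [← Finset.mul_prod_erase Finset.univ _ (Finset.mem_univ (0 : ZMod r))]
    have main : (∏ i : ZMod r, Nc (a * b ^ i.val)) * Nc b = P * g ^ r := by
      rw [Finset.prod_congr rfl (fun i _ => step1 i), step2,
        ← Finset.mul_prod_erase Finset.univ _ (Finset.mem_univ (0 : ZMod r)), step4,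
        Finset.prod_congr rfl (fun j hj => step3 j (Finset.mem_erase.mp hj).1), hNb, hPsplit]
      ac_rfl
    -- memberships
    have hci : ∀ i : ZMod r, Nc (a * b ^ i.val) ∈ H := by
      intro i
      have hne : a * b ^ i.val ≠ 1 := by
        intro h
        apply hab
        have : a = (b ^ i.val)⁻¹ := by
          rw [eq_inv_iff_mul_eq_one]; exact h
        rw [this]
        exact (Subgroup.zpowers b).inv_mem ((Subgroup.zpowers b).pow_mem (Subgroup.mem_zpowers b) _)
      have hcr : (a * b ^ i.val) ^ r = 1 := by
        rw [mul_pow, ha, one_mul, ← pow_mul, mul_comm i.val r, pow_mul, hb, one_pow]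
      exact hle _ hne (hNfix _ hcr)
    have hNbH : Nc b ∈ H := hle b hb1 (hNfix b hb)
    have hPH : P ∈ H := hle a ha1 hPfix
    have : g ^ r = P⁻¹ * ((∏ i : ZMod r, Nc (a * b ^ i.val)) * Nc b) := by
      rw [main]; group
    rw [this]
    exact H.mul_mem (H.inv_mem hPH) (H.mul_mem (Subgroup.prod_mem H (fun i _ => hci i)) hNbH)
  -- conclude
  rw [Subgroup.eq_top_iff']
  intro g
  by_cases hg : orderOf g = 1
  · rw [orderOf_eq_one_iff.mp hg]; exact H.one_mem
  · have hn : 1 < orderOf g := lt_of_le_of_ne (Nat.one_le_iff_ne_zero.mpr (orderOf_pos g).ne')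
      (Ne.symm hg)
    have cop : (Nat.Coprime r (orderOf g)) := hr.coprime_iff_not_dvd.mpr
      (fun hd => hG (hd.trans (orderOf_dvd_natCard g)))
    obtain ⟨k, -, hk⟩ := Nat.exists_mul_mod_eq_one_of_coprime cop hn
    have : g = (g ^ r) ^ k := by
      rw [← pow_mul, ← pow_mod_orderOf, hk, pow_one]
    rw [this]
    exact Subgroup.pow_mem _ (key g) k

end Abelian

section Indep

lemma exists_indep {A : Type*} [CommGroup A] [Finite A] (r : ℕ) (hr : r.Prime) [Fact r.Prime]
    (hpA : IsPGroup r A) (hnc : ¬ IsCyclic A) :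
    ∃ a b : A, a ^ r = 1 ∧ b ^ r = 1 ∧ b ≠ 1 ∧ a ∉ Subgroup.zpowers b := by
  by_contra hcon
  push_neg at hcon
  apply hnc
  rcases subsingleton_or_nontrivial A with hs | hnt
  · exact @isCyclic_of_subsingleton A _ hs
  have hrA : r ∣ Nat.card A := by
    obtain ⟨n, hn⟩ := hpA.exists_card_eq
    rcases n with - | n
    · simp at hn
      exact absurd (Nat.card_eq_one_iff_unique.mp hn).1 (not_subsingleton A)
    · exact hn ▸ dvd_pow_self r (Nat.succ_ne_zero n)
  obtain ⟨b₀, hb₀⟩ := exists_prime_orderOf_dvd_card' r hrA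
  have hb₀r : b₀ ^ r = 1 := by rw [← hb₀]; exact pow_orderOf_eq_one b₀
  have hb₀1 : b₀ ≠ 1 := by
    intro h; rw [h, orderOf_one] at hb₀; exact hr.one_lt.ne' hb₀.symm
  set U : ℕ → Subgroup A := fun v => MonoidHom.ker (powMonoidHom (r ^ v) : A →* A) with hU
  have hmemU : ∀ (v : ℕ) (x : A), x ∈ U v ↔ x ^ (r ^ v) = 1 := by
    intro v x; rw [hU]; simp [MonoidHom.mem_ker, powMonoidHom_apply]
  have bound : ∀ v, Nat.card (U v) ≤ r ^ v := by
    intro v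
    induction v with
    | zero =>
      have : U 0 = ⊥ := by
        ext x; simp [hmemU 0 x, Subgroup.mem_bot]
      rw [this]; simp
    | succ v ih =>
      set ρ : U (v + 1) →* A := (powMonoidHom r).comp (U (v + 1)).subtype with hρ
      have hρval : ∀ x : U (v + 1), ρ x = (x : A) ^ r := fun x => rfl
      have h1 : Nat.card (MonoidHom.ker ρ) ≤ r := by
        have hinj : Function.Injective
            (fun x : MonoidHom.ker ρ => (⟨(x : U (v + 1)) , by
              rcases eq_or_ne ((x : U (v+1)) : A) 1 with h | h
              · rw [h]; exact Subgroup.one_mem _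
              · exact hcon _ b₀ (by have := x.2; rwa [MonoidHom.mem_ker, hρval] at this)
                  hb₀r hb₀1⟩ : Subgroup.zpowers b₀)) := by
          intro x y hxy
          have := congrArg Subtype.val hxy
          simp only at this
          exact Subtype.ext (Subtype.ext this)
        calc Nat.card (MonoidHom.ker ρ) ≤ Nat.card (Subgroup.zpowers b₀) :=
              Nat.card_le_card_of_injective _ hinj
          _ = r := by rw [Nat.card_zpowers, hb₀]
      have h2 : ρ.range ≤ U v := by
        rintro x ⟨y, rfl⟩
        rw [hmemU, hρval, ← pow_mul, ← pow_succ']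
        have := y.2; rwa [hmemU] at this
      have h3 : Nat.card ρ.range ≤ r ^ v :=
        le_trans (Nat.card_le_card_of_injective _ (Subgroup.inclusion_injective h2)) ih
      calc Nat.card (U (v + 1))
          = Nat.card (U (v + 1) ⧸ MonoidHom.ker ρ) * Nat.card (MonoidHom.ker ρ) :=
            Subgroup.card_eq_card_quotient_mul_card_subgroup _
        _ = Nat.card ρ.range * Nat.card (MonoidHom.ker ρ) := by
            rw [Nat.card_congr (QuotientGroup.quotientKerEquivRange ρ).toEquiv]
        _ ≤ r ^ v * r := Nat.mul_le_mul h3 h1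
        _ = r ^ (v + 1) := (pow_succ r v).symm
  -- now apply the cyclicity criterion
  classical
  haveI : Fintype A := Fintype.ofFinite A
  apply isCyclic_of_card_pow_eq_one_le
  intro n hn
  set v := n.factorization r with hv
  have h1 : ∀ x : A, x ^ n = 1 → x ∈ U v := by
    intro x hx
    obtain ⟨k, hk⟩ := hpA x
    obtain ⟨m, hm, horder⟩ := (Nat.dvd_prime_pow hr).mp (orderOf_dvd_of_pow_eq_one hk)
    have hdn : r ^ m ∣ n := horder ▸ orderOf_dvd_of_pow_eq_one hx
    have hmv : m ≤ v := (Nat.Prime.pow_dvd_iff_le_factorization hr hn.ne').mp hdn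
    rw [hmemU, ← orderOf_dvd_iff_pow_eq_one, horder]
    exact pow_dvd_pow r hmv
  open Finset in
  calc #{a : A | a ^ n = 1} ≤ ((U v : Set A).toFinset).card := by
        apply Finset.card_le_card
        intro x hx
        simp only [Finset.mem_filter] at hx
        simp only [Set.mem_toFinset, SetLike.mem_coe]
        exact h1 x (by simpa using hx)
    _ = Nat.card (U v) := by
        simp only [Set.toFinset_card, Nat.card_eq_fintype_card]
        exact Fintype.card_congr { toFun := fun x => ⟨x.1, x.2⟩, invFun := fun x => ⟨x.1, x.2⟩, left_inv := fun x => rfl, right_inv := fun x => rfl }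
    _ ≤ r ^ v := bound v
    _ ≤ n := Nat.le_of_dvd hn (Nat.ordProj_dvd n r)

end Indep

section PGroupCase

universe u v

open scoped commutatorElement

lemma pgroup_gen {A : Type u} [CommGroup A] [Finite A] (r q : ℕ) (hr : r.Prime) [Fact r.Prime]
    (hq : q.Prime) (hpA : IsPGroup r A)
    (a b : A) (ha : a ^ r = 1) (hb : b ^ r = 1) (hb1 : b ≠ 1) (hab : a ∉ Subgroup.zpowers b) :
    ∀ (n : ℕ) {G : Type v} [Group G] [Finite G], Nat.card G ≤ n → IsPGroup q G →
      ¬ r ∣ Nat.card G → ∀ (φ : A →* MulAut G),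
      (⨆ c ∈ {c : A | c ≠ 1}, fixedBy (φ c)) = ⊤ := by
  haveI : Fact q.Prime := ⟨hq⟩
  intro n
  induction n with
  | zero =>
    intro G _ _ hcard _ _ _
    exact absurd (Nat.card_pos.trans_le hcard) (lt_irrefl 0)
  | succ n IH =>
    intro G _ _ hcard hQ hGr φ
    set H := ⨆ c ∈ {c : A | c ≠ 1}, fixedBy (φ c) with hH
    have hle : ∀ c : A, c ≠ 1 → fixedBy (φ c) ≤ H := fun c hc =>
      le_iSup₂ (f := fun (c : A) (_ : c ∈ {c : A | c ≠ 1}) => fixedBy (φ c)) c hc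
    rcases subsingleton_or_nontrivial G with hs | hnt
    · rw [Subgroup.eq_top_iff']
      intro g
      rw [Subsingleton.elim g 1]; exact H.one_mem
    have horder : ∀ c : A, ∃ k : ℕ, (φ c) ^ (r ^ k) = 1 := by
      intro c; obtain ⟨k, hk⟩ := hpA c; exact ⟨k, by rw [← map_pow, hk, map_one]⟩
    have lift : ∀ (N : Subgroup G) (_ : N.Normal)
        (hinv : ∀ (c : A) x, x ∈ N → φ c x ∈ N),
        (⨆ c ∈ {c : A | c ≠ 1}, fixedBy ((quotMap φ N hinv) c)) = ⊤ →
        ∀ g : G, ∃ h ∈ H, ∃ z ∈ N, g = h * z := by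
      intro N hN hinv htop g
      have hker : ¬ r ∣ Nat.card (QuotientGroup.mk' N).ker := by
        rw [QuotientGroup.ker_mk']
        exact fun hd => hGr (hd.trans (Subgroup.card_subgroup_dvd_card N))
      have h2 : (⊤ : Subgroup (G ⧸ N)) ≤ H.map (QuotientGroup.mk' N) := by
        rw [← htop]
        refine iSup₂_le fun c hc => ?_
        refine le_trans (fixedBy_quot_le (QuotientGroup.mk' N)
          (QuotientGroup.mk'_surjective N) r hr hker (φ c) (quotMap φ N hinv c)
          (fun x => rfl) (horder c)) ?_
        exact Subgroup.map_mono (hle c hc)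
      obtain ⟨h, hh, hmk⟩ := h2 (Subgroup.mem_top ((g : G ⧸ N)))
      refine ⟨h, hh, h⁻¹ * g, ?_, by group⟩
      rw [← QuotientGroup.eq]
      exact hmk
    -- center step
    set Z := Subgroup.center G with hZ
    haveI : Nontrivial Z := hQ.center_nontrivial
    have hZinv : ∀ (c : A) x, x ∈ Z → φ c x ∈ Z := by
      intro c x hx
      rw [hZ, Subgroup.mem_center_iff]
      intro g
      obtain ⟨y, rfl⟩ := (φ c).surjective g
      rw [← map_mul, ← map_mul, Subgroup.mem_center_iff.mp hx y]
    have hqcard : Nat.card (G ⧸ Z) ≤ n := by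
      have h1 : Nat.card G = Nat.card (G ⧸ Z) * Nat.card Z :=
        Subgroup.card_eq_card_quotient_mul_card_subgroup Z
      have h2 : 2 ≤ Nat.card Z := Finite.one_lt_card_iff_nontrivial.mpr inferInstance
      have h3 : 0 < Nat.card (G ⧸ Z) := Nat.card_pos
      nlinarith
    have hcenter := IH hqcard (hQ.to_quotient Z)
      (fun hd => hGr (hd.trans (Subgroup.card_quotient_dvd_card Z))) (quotMap φ Z hZinv)
    have hdecZ := lift Z inferInstance hZinv hcenter
    -- commutator ≤ H
    have hcomm : commutator G ≤ H := by
      rw [commutator_def, Subgroup.commutator_le]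
      intro g₁ hg₁ g₂ hg₂
      obtain ⟨h₁, hh₁, z₁, hz₁, rfl⟩ := hdecZ g₁
      obtain ⟨h₂, hh₂, z₂, hz₂, rfl⟩ := hdecZ g₂
      have e1 : ⁅h₁ * z₁, h₂ * z₂⁆ = ⁅h₁, h₂⁆ := by
        have c1 : z₁ * (h₂ * z₂) * z₁⁻¹ = h₂ * z₂ := by
          rw [← Subgroup.mem_center_iff.mp hz₁ (h₂ * z₂)]
          group
        have c2 : z₂ * h₁⁻¹ * z₂⁻¹ = h₁⁻¹ := by
          rw [← Subgroup.mem_center_iff.mp hz₂ h₁⁻¹]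
          group
        calc ⁅h₁ * z₁, h₂ * z₂⁆ = h₁ * (z₁ * (h₂ * z₂) * z₁⁻¹) * h₁⁻¹ * (h₂ * z₂)⁻¹ := by
              rw [commutatorElement_def]; group
          _ = h₁ * (h₂ * z₂) * h₁⁻¹ * (h₂ * z₂)⁻¹ := by rw [c1]
          _ = h₁ * h₂ * (z₂ * h₁⁻¹ * z₂⁻¹) * h₂⁻¹ := by group
          _ = ⁅h₁, h₂⁆ := by rw [c2]; rfl
      rw [e1]
      exact H.mul_mem (H.mul_mem (H.mul_mem hh₁ hh₂) (H.inv_mem hh₁)) (H.inv_mem hh₂)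
    -- commutator quotient step
    set C := commutator G with hC
    have hCinv : ∀ (c : A) x, x ∈ C → φ c x ∈ C := by
      intro c x hx
      have h := Subgroup.characteristic_iff_le_comap.mp (inferInstance : C.Characteristic) (φ c)
      exact h hx
    letI : CommGroup (G ⧸ C) :=
      { (inferInstance : Group (G ⧸ C)) with
        mul_comm := fun x y => by
          refine QuotientGroup.induction_on x fun u => QuotientGroup.induction_on y fun v => ?_
          rw [← QuotientGroup.mk_mul, ← QuotientGroup.mk_mul, QuotientGroup.eq]
          rw [show (u * v)⁻¹ * (v * u) = ⁅v⁻¹, u⁻¹⁆ by rw [commutatorElement_def]; group]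
          exact Subgroup.commutator_mem_commutator (Subgroup.mem_top _) (Subgroup.mem_top _) }
    have habel : (⨆ c ∈ {c : A | c ≠ 1}, fixedBy ((quotMap φ C hCinv) c)) = ⊤ := by
      refine abelian_gen r hr ?_ (quotMap φ C hCinv) a b ha hb hb1 hab
      exact fun hd => hGr (hd.trans (Subgroup.card_quotient_dvd_card C))
    have hdecC := lift C inferInstance hCinv habel
    rw [Subgroup.eq_top_iff']
    intro g
    obtain ⟨h, hh, z, hz, rfl⟩ := hdecC g
    exact H.mul_mem hh (hcomm hz)

end PGroupCase

section InvariantSylow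

open SemidirectProduct

lemma exists_invariant_sylow {A G : Type*} [Group A] [Finite A] [Group G] [Finite G]
    (r : ℕ) (hr : r.Prime) [Fact r.Prime] (hpA : IsPGroup r A) (hG : ¬ r ∣ Nat.card G)
    (q : ℕ) (hq : q.Prime) [Fact q.Prime] (hqr : q ≠ r) (φ : A →* MulAut G) :
    ∃ Q : Sylow q G, ∀ (a : A) (x : G), x ∈ (Q : Subgroup G) → φ a x ∈ (Q : Subgroup G) := by
  -- the semidirect product
  let Γ := G ⋊[φ] A
  let eΓ : G × A ≃ Γ :=
    ⟨fun p => ⟨p.1, p.2⟩, fun x => (x.left, x.right), fun _ => rfl, fun _ => rfl⟩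
  haveI : Finite Γ := Finite.of_equiv _ eΓ
  have cardΓ : Nat.card Γ = Nat.card G * Nat.card A := by
    rw [← Nat.card_prod]; exact (Nat.card_congr eΓ.symm)
  obtain ⟨nA, hnA⟩ := hpA.exists_card_eq
  have hG0 : Nat.card G ≠ 0 := Nat.card_pos.ne'
  have hfacr : (Nat.card Γ).factorization r = nA := by
    rw [cardΓ, hnA, Nat.factorization_mul hG0 (pow_ne_zero _ hr.ne_zero),
      Nat.Prime.factorization_pow hr]
    simp [Nat.factorization_eq_zero_of_not_dvd hG]
  have hfacq : (Nat.card Γ).factorization q = (Nat.card G).factorization q := by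
    rw [cardΓ, hnA, Nat.factorization_mul hG0 (pow_ne_zero _ hr.ne_zero),
      Nat.Prime.factorization_pow hr]
    simp [Finsupp.single_apply, Ne.symm hqr]
  -- G embedded normally
  set G' : Subgroup Γ := (inl : G →* Γ).range with hG'
  haveI : G'.Normal := by
    rw [hG', range_inl_eq_ker_rightHom]; infer_instance
  have cardG' : Nat.card G' = Nat.card G :=
    (Nat.card_congr (MonoidHom.ofInjective (inl_injective (φ := φ))).toEquiv).symm
  -- a Sylow q-subgroup of Γ inside G'
  obtain ⟨Q₀⟩ : Nonempty (Sylow q G) := inferInstance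
  have cardQ₀ : Nat.card (Q₀ : Subgroup G) = q ^ (Nat.card G).factorization q :=
    Q₀.card_eq_multiplicity
  set P' : Subgroup Γ := (Q₀ : Subgroup G).map (inl : G →* Γ) with hP'
  have cardP' : Nat.card P' = q ^ (Nat.card Γ).factorization q := by
    rw [hfacq, ← cardQ₀]
    exact (Nat.card_congr ((Q₀ : Subgroup G).equivMapOfInjective _ inl_injective).toEquiv).symm
  let PΓ : Sylow q Γ := Sylow.ofCard P' cardP'
  have hPle : (PΓ : Subgroup Γ) ≤ G' := by
    show P' ≤ G'
    rw [hP', hG']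
    exact Subgroup.map_le_range _ _
  have frattini := Sylow.normalizer_sup_eq_top' PΓ hPle
  set M := Subgroup.normalizer (PΓ : Set Γ) with hM
  -- card A divides card M
  have hdvd : Nat.card A ∣ Nat.card M := by
    have e2 := QuotientGroup.quotientInfEquivProdNormalQuotient M G'
    have hcard1 : Nat.card (↥(M ⊔ G') ⧸ G'.subgroupOf (M ⊔ G')) = Nat.card A := by
      have h1 : Nat.card (↥(M ⊔ G') ⧸ G'.subgroupOf (M ⊔ G')) = G'.relIndex (M ⊔ G') := rfl
      rw [h1, frattini, Subgroup.relIndex_top_right]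
      have h2 : Nat.card G' * G'.index = Nat.card Γ := Subgroup.card_mul_index G'
      rw [cardΓ, cardG'] at h2
      exact Nat.eq_of_mul_eq_mul_left (Nat.pos_of_ne_zero hG0) h2
    have h3 : Nat.card M = Nat.card (M ⧸ G'.subgroupOf M) * Nat.card (G'.subgroupOf M) :=
      Subgroup.card_eq_card_quotient_mul_card_subgroup _
    rw [Nat.card_congr e2.toEquiv, hcard1] at h3
    exact Dvd.intro _ h3.symm
  -- a Sylow r-subgroup of Γ inside M
  obtain ⟨S⟩ : Nonempty (Sylow r M) := inferInstance
  set T : Subgroup Γ := (S : Subgroup M).map M.subtype with hT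
  have cardT : Nat.card T = r ^ (Nat.card Γ).factorization r := by
    have h1 : Nat.card T = Nat.card (S : Subgroup M) :=
      (Nat.card_congr ((S : Subgroup M).equivMapOfInjective _ M.subtype_injective).toEquiv).symm
    rw [h1, S.card_eq_multiplicity, hfacr]
    congr 1
    have hMdvd : Nat.card M ∣ Nat.card Γ := Subgroup.card_subgroup_dvd_card M
    have hM0 : Nat.card M ≠ 0 := Nat.card_pos.ne'
    have hub : (Nat.card M).factorization r ≤ nA := by
      rw [← hfacr]
      exact (Nat.factorization_le_iff_dvd hM0 Nat.card_pos.ne').mpr hMdvd r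
    have hlb : nA ≤ (Nat.card M).factorization r :=
      (Nat.Prime.pow_dvd_iff_le_factorization hr hM0).mp (hnA ▸ hdvd)
    omega
  have hTM : T ≤ M := by rw [hT]; exact Subgroup.map_subtype_le _
  let TS : Sylow r Γ := Sylow.ofCard T cardT
  -- the image of A is a Sylow r-subgroup
  set A' : Subgroup Γ := (inr : A →* Γ).range with hA'
  have cardA' : Nat.card A' = r ^ (Nat.card Γ).factorization r := by
    rw [hfacr, ← hnA]
    exact (Nat.card_congr (MonoidHom.ofInjective (inr_injective (φ := φ))).toEquiv).symm
  let AS : Sylow r Γ := Sylow.ofCard A' cardA'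
  obtain ⟨γ, hγ⟩ := MulAction.exists_smul_eq Γ TS AS
  have hconj : A' = T.map (MulAut.conj γ).toMonoidHom := by
    have h2 : ((γ • TS : Sylow r Γ) : Subgroup Γ) = T.map (MulAut.conj γ).toMonoidHom := rfl
    have h1 : ((γ • TS : Sylow r Γ) : Subgroup Γ) = A' := by rw [hγ]; rfl
    rw [← h1, h2]
  -- A' normalizes Q'' := P' conjugated by γ
  set Q'' : Subgroup Γ := P'.map (MulAut.conj γ).toMonoidHom with hQ''
  have hA'norm : A' ≤ Subgroup.normalizer (Q'' : Set Γ) := by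
    rw [hconj, hQ'']
    calc T.map (MulAut.conj γ).toMonoidHom ≤ M.map (MulAut.conj γ).toMonoidHom :=
          Subgroup.map_mono hTM
      _ = Subgroup.normalizer (Q'' : Set Γ) := by
          rw [hM]; exact Subgroup.map_equiv_normalizer_eq (PΓ : Subgroup Γ) _
  have hQ''G' : Q'' ≤ G' := by
    rintro x ⟨p, hp, rfl⟩
    exact Subgroup.Normal.conj_mem ‹G'.Normal› p (hPle hp) γ
  -- pull back to G
  set Q₂ : Subgroup G := Q''.comap (inl : G →* Γ) with hQ₂
  have hmapQ₂ : Q₂.map (inl : G →* Γ) = Q'' := by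
    rw [hQ₂]
    exact Subgroup.map_comap_eq_self (le_trans hQ''G' (le_of_eq rfl))
  have cardQ₂ : Nat.card Q₂ = q ^ (Nat.card G).factorization q := by
    have h1 : Nat.card Q₂ = Nat.card Q'' := by
      rw [← hmapQ₂]
      exact Nat.card_congr (Q₂.equivMapOfInjective _ inl_injective).toEquiv
    have h2 : Nat.card Q'' = Nat.card P' :=
      (Nat.card_congr (P'.equivMapOfInjective _ (MulAut.conj γ).injective).toEquiv).symm
    rw [h1, h2, cardP', hfacq]
  refine ⟨Sylow.ofCard Q₂ cardQ₂, ?_⟩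
  intro a x hx
  have hx' : inl x ∈ Q'' := by
    rw [← hmapQ₂]
    exact Subgroup.mem_map_of_mem _ hx
  have hnorm := Subgroup.mem_normalizer_iff.mp (hA'norm ⟨a, rfl⟩) (inl x)
  have hmem : inr a * inl x * (inr a)⁻¹ ∈ Q'' := hnorm.mp hx'
  have h5 : (inl ((φ a) x) : Γ) = inr a * inl x * (inr a)⁻¹ := by rw [inl_aut, map_inv]
  exact Subgroup.mem_comap.mpr (h5 ▸ hmem)

end InvariantSylow

theorem stmt8 {A G : Type*} [CommGroup A] [Finite A] [Group G] [Finite G]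
    (r : ℕ) (hr : r.Prime) (hpA : IsPGroup r A) (hnc : ¬ IsCyclic A)
    (hG : ¬ r ∣ Nat.card G) (φ : A →* MulAut G) :
    (⨆ a ∈ {a : A | a ≠ 1}, fixedBy (φ a)) = ⊤ := by
  haveI : Fact r.Prime := ⟨hr⟩
  obtain ⟨a, b, ha, hb, hb1, hab⟩ := exists_indep r hr hpA hnc
  set H := ⨆ c ∈ {c : A | c ≠ 1}, fixedBy (φ c) with hH
  have hle : ∀ c : A, c ≠ 1 → fixedBy (φ c) ≤ H := fun c hc =>
    le_iSup₂ (f := fun (c : A) (_ : c ∈ {c : A | c ≠ 1}) => fixedBy (φ c)) c hc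
  have hidx : H.index = 1 := by
    by_contra hne
    obtain ⟨qp, hqp, hqdvd⟩ := Nat.exists_prime_and_dvd hne
    haveI : Fact qp.Prime := ⟨hqp⟩
    have hqG : qp ∣ Nat.card G := hqdvd.trans H.index_dvd_card
    have hqr : qp ≠ r := fun h => hG (h ▸ hqG)
    obtain ⟨Q, hQinv⟩ := exists_invariant_sylow r hr hpA hG qp hqp hqr φ
    set ψ := subMap φ (Q : Subgroup G) hQinv with hψ
    have htop := pgroup_gen r qp hr hqp hpA a b ha hb hb1 hab (Nat.card (Q : Subgroup G))
      le_rfl Q.isPGroup'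
      (fun hd => hG (hd.trans (Subgroup.card_subgroup_dvd_card _))) ψ
    have hQH : (Q : Subgroup G) ≤ H := by
      intro x hx
      have hxtop : (⟨x, hx⟩ : (Q : Subgroup G)) ∈ (⊤ : Subgroup (Q : Subgroup G)) :=
        Subgroup.mem_top _
      rw [← htop] at hxtop
      have h2 : (⨆ c ∈ {c : A | c ≠ 1}, fixedBy (ψ c)).map (Q : Subgroup G).subtype ≤ H := by
        rw [Subgroup.map_iSup]
        refine iSup_le fun c => ?_
        rw [Subgroup.map_iSup]
        refine iSup_le fun hc => ?_
        refine le_trans ?_ (hle c hc)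
        rintro y ⟨z, hz, rfl⟩
        exact congrArg Subtype.val hz
      exact h2 (Subgroup.mem_map_of_mem _ hxtop)
    haveI : (Q : Subgroup G).FiniteIndex := ⟨Subgroup.index_ne_zero_of_finite⟩
    exact Q.not_dvd_index (hqdvd.trans (Subgroup.index_dvd_of_le hQH))
  exact Subgroup.index_eq_one.mp hidx
end

section
/- Let P be a finite p-group with a group C acting on it, and suppose P = P₁ × ⋯ × Pₙ where C permutes the factors {P₁,…,Pₙ} semiregularly. Then Z(C_P(C)) ≤ Z(P), and consequently Z(C_P(C)) = C_{Z(P)}(C). -/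
theorem mem_fixedSubgroup_iff {R G : Type*} [Group R] [Group G] (φ : R →* MulAut G) {g : G} :
    g ∈ fixedSubgroup φ ↔ ∀ r : R, φ r g = g := Iff.rfl

theorem my_noncommProd_eq_single {α M : Type*} [Monoid M] [DecidableEq α]
    (s : Finset α) (f : α → M) (comm) (c₀ : α) (h₀ : c₀ ∈ s)
    (h : ∀ c ∈ s, c ≠ c₀ → f c = 1) :
    s.noncommProd f comm = f c₀ := by
  have h₁ : s = insert c₀ (s.erase c₀) := (Finset.insert_erase h₀).symm
  rw [(Finset.noncommProd_congr h₁ (fun x _ => rfl) comm).trans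
      (Finset.noncommProd_insert_of_notMem _ _ _ _ (Finset.notMem_erase c₀ _)),
    Finset.noncommProd_eq_pow_card _ _ _ 1
      (fun x hx => h x (Finset.mem_of_mem_erase hx) (Finset.ne_of_mem_erase hx)),
    one_pow, mul_one]

theorem my_noncommProd_comp_equiv {α M : Type*} [Monoid M] [Fintype α]
    (f : α → M) (e : α ≃ α) (comm') (comm) :
    Finset.univ.noncommProd (fun c => f (e c)) comm' = Finset.univ.noncommProd f comm := by
  have key : ∀ (s t : Multiset M) (hs : Set.Pairwise {x | x ∈ s} Commute)
      (ht : Set.Pairwise {x | x ∈ t} Commute), s = t →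
      Multiset.noncommProd s hs = Multiset.noncommProd t ht := by
    rintro s t hs ht rfl; rfl
  apply key
  have h1 : (Finset.univ : Finset α) = Finset.univ.map e.toEmbedding :=
    (Finset.map_univ_equiv e).symm
  conv_rhs => rw [h1]
  rw [Finset.map_val, Multiset.map_map]
  rfl

theorem stmt10 {C P : Type*} [Group C] [Group P] [Finite P]
    (p : ℕ) (hp : p.Prime) (hP : IsPGroup p P)
    (φ : C →* MulAut P) (n : ℕ) (Ps : Fin n → Subgroup P)
    (hcomm : Pairwise fun i j => ∀ (x : (Ps i)) (y : (Ps j)),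
      Commute ((Ps i).subtype x) ((Ps j).subtype y))
    (hprod : Function.Bijective
      (MonoidHom.noncommPiCoprod (fun i => (Ps i).subtype) hcomm))
    (hperm : ∀ (c : C) (i : Fin n), ∃ j, (Ps i).map (φ c).toMonoidHom = Ps j)
    (hsemireg : ∀ c : C, c ≠ 1 → ∀ i, (Ps i).map (φ c).toMonoidHom ≠ Ps i) :
    fixedSubgroup φ ⊓ Subgroup.centralizer (fixedSubgroup φ : Set P) ≤ Subgroup.center P ∧
    fixedSubgroup φ ⊓ Subgroup.centralizer (fixedSubgroup φ : Set P) =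
      Subgroup.center P ⊓ fixedSubgroup φ := by
  classical
  set f := MonoidHom.noncommPiCoprod (fun i => (Ps i).subtype) hcomm with hfdef
  have key : fixedSubgroup φ ⊓ Subgroup.centralizer (fixedSubgroup φ : Set P) ≤
      Subgroup.center P := by
    intro g hg
    obtain ⟨hg1, hg2⟩ := hg
    rcases isEmpty_or_nonempty (Fin n) with hn | hn
    · haveI := hn
      have hsub : Subsingleton P := hprod.2.subsingleton
      rw [Subgroup.mem_center_iff]
      intro x
      exact Subsingleton.elim _ _
    · obtain ⟨i₀⟩ := hn
      have hmap : ∀ (a b : C) (i : Fin n),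
          (Ps i).map (φ (a * b)).toMonoidHom
            = ((Ps i).map (φ b).toMonoidHom).map (φ a).toMonoidHom := by
        intro a b i
        have hh : (φ (a * b)).toMonoidHom = (φ a).toMonoidHom.comp (φ b).toMonoidHom := by
          ext x; simp [map_mul]
        rw [hh, ← Subgroup.map_map]
      have hmap1 : ∀ i : Fin n, (Ps i).map (φ (1 : C)).toMonoidHom = Ps i := by
        intro i
        ext x
        simp [Subgroup.mem_map]
      have hσ : ∀ (c : C) (i : Fin n),
          (Ps i).map (φ c).toMonoidHom = Ps ((hperm c i).choose) :=
        fun c i => (hperm c i).choose_spec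
      set σ : C → Fin n → Fin n := fun c i => (hperm c i).choose with hσdef
      have hinj : ∀ i : Fin n, Function.Injective fun c => σ c i := by
        intro i c c' h
        by_contra hne
        have h1 : (Ps i).map (φ c).toMonoidHom = (Ps i).map (φ c').toMonoidHom := by
          rw [hσ c i, hσ c' i]
          exact congrArg Ps h
        have h2 : (Ps i).map (φ (c'⁻¹ * c)).toMonoidHom = Ps i := by
          rw [hmap, h1, ← hmap, inv_mul_cancel, hmap1]
        refine hsemireg (c'⁻¹ * c) (fun h0 => hne ?_) i h2
        rw [inv_mul_eq_one] at h0
        exact h0.symm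
      haveI : Finite C := Finite.of_injective _ (hinj i₀)
      haveI : Fintype C := Fintype.ofFinite C
      set E := MulEquiv.ofBijective f hprod with hEdef
      set F := E.symm with hFdef
      have hrep : ∀ z : P, f (F z) = z := fun z => E.apply_symm_apply z
      have main : ∀ (i : Fin n) (x : P), x ∈ Ps i → Commute g x := by
        intro i x hx
        set a : C → P := fun c => φ c x with hadef
        have haσ : ∀ c, a c ∈ Ps (σ c i) := by
          intro c
          rw [← hσ c i]
          exact ⟨x, hx, rfl⟩
        have ha1 : a 1 = x := by simp [hadef]
        have hane : ∀ c c' : C, c ≠ c' → σ c i ≠ σ c' i := fun c c' h h' => h (hinj i h')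
        have hcpair : ∀ c c' : C, c ≠ c' → Commute (a c) (a c') := by
          intro c c' h
          have := hcomm (hane c c' h) ⟨a c, haσ c⟩ ⟨a c', haσ c'⟩
          simpa using this
        have hcomm' : ((Finset.univ : Finset C) : Set C).Pairwise (Function.onFun Commute a) :=
          fun c _ c' _ h => hcpair c c' h
        set y := Finset.univ.noncommProd a hcomm' with hy
        have hyfix : y ∈ fixedSubgroup φ := by
          rw [mem_fixedSubgroup_iff]
          intro c'
          have h1 := Finset.map_noncommProd Finset.univ a hcomm' (φ c').toMonoidHom
          have hstep : ∀ c ∈ (Finset.univ : Finset C),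
              (φ c').toMonoidHom (a c) = a ((Equiv.mulLeft c') c) := by
            intro c _
            show φ c' (φ c x) = φ (c' * c) x
            rw [map_mul]
            rfl
          replace h1 := h1.trans (Finset.noncommProd_congr rfl hstep _)
          exact h1.trans (my_noncommProd_comp_equiv a (Equiv.mulLeft c') _ hcomm')
        have hgy : Commute y g := (Subgroup.mem_centralizer_iff.mp hg2) y hyfix
        have hFa : ∀ c, F (a c) = Pi.mulSingle (σ c i) (⟨a c, haσ c⟩ : Ps (σ c i)) := by
          intro c
          rw [hFdef, MulEquiv.symm_apply_eq]
          show a c = f (Pi.mulSingle (σ c i) (⟨a c, haσ c⟩ : Ps (σ c i)))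
          rw [hfdef, MonoidHom.noncommPiCoprod_mulSingle]
          rfl
        have hj0 : x ∈ Ps (σ 1 i) := ha1 ▸ haσ 1
        have hFy : F y (σ 1 i) = ⟨x, hj0⟩ := by
          have h1 := Finset.map_noncommProd Finset.univ a hcomm'
            ((Pi.evalMonoidHom (fun j => (Ps j : Subgroup P)) (σ 1 i)).comp F.toMonoidHom)
          have h2 := my_noncommProd_eq_single Finset.univ
            (fun c => ((Pi.evalMonoidHom (fun j => (↥(Ps j))) (σ 1 i)).comp F.toMonoidHom) (a c))
            (fun u hu v hv huv => (hcpair u v huv).map _) 1 (Finset.mem_univ 1)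
            (fun c _ hc => by
              show F (a c) (σ 1 i) = 1
              rw [hFa c]
              exact Pi.mulSingle_eq_of_ne (hane 1 c (Ne.symm hc)) _)
          have h3 : ((Pi.evalMonoidHom (fun j => (↥(Ps j))) (σ 1 i)).comp F.toMonoidHom) (a 1)
              = (⟨x, hj0⟩ : Ps (σ 1 i)) := by
            show F (a 1) (σ 1 i) = _
            rw [hFa 1, Pi.mulSingle_eq_same]
            exact Subtype.ext ha1
          exact (h1.trans h2).trans h3
        have h5 : F g (σ 1 i) * F y (σ 1 i) = F y (σ 1 i) * F g (σ 1 i) := by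
          have h0 : F (g * y) = F (y * g) := congrArg F hgy.symm
          rw [map_mul, map_mul] at h0
          exact congrFun h0 (σ 1 i)
        rw [hFy] at h5
        have h6 : (F g (σ 1 i) : P) * x = x * (F g (σ 1 i) : P) := congrArg Subtype.val h5
        have hcom : ∀ j, Commute x ((Ps j).subtype (F g j)) := by
          intro j
          rcases eq_or_ne (σ 1 i) j with rfl | hne
          · exact h6.symm
          · have := hcomm hne ⟨x, hj0⟩ (F g j)
            simpa using this
        have hfin : Commute x (f (F g)) := by
          show Commute x (Finset.univ.noncommProd (fun j => (Ps j).subtype (F g j))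
            fun _ _ _ _ h => hcomm h _ _)
          exact Finset.noncommProd_commute _ _ _ _ fun j _ => hcom j
        rw [hrep g] at hfin
        exact hfin.symm
      rw [Subgroup.mem_center_iff]
      intro z
      have hz : Commute g (f (F z)) := by
        show Commute g (Finset.univ.noncommProd (fun j => (Ps j).subtype (F z j))
          fun _ _ _ _ h => hcomm h _ _)
        exact Finset.noncommProd_commute _ _ _ _ fun j _ => main j _ (F z j).2
      rw [hrep z] at hz
      exact hz.symm
  refine ⟨key, le_antisymm (le_inf key inf_le_left) ?_⟩
  intro g hg
  exact ⟨hg.2, Subgroup.center_le_centralizer (fixedSubgroup φ : Set P) hg.1⟩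
end

section
/- Let A be an abelian group acting on a finite group X which is a direct product X = K₁ × ⋯ × Kₙ of nonabelian simple subgroups permuted transitively by A, and suppose b ∈ A acts semiregularly (without fixed points) on {K₁,…,Kₙ}. Then C_X(b) is a direct product of n/|⟨b⟩| nonabelian simple subgroups permuted transitively by A, each isomorphic to K₁. -/
theorem noncommProd_reindex {M ι : Type*} [Monoid M] [Fintype ι] (e : ι ≃ ι) (f : ι → M)
    (h₁ h₂) :
    Finset.univ.noncommProd (fun i => f (e i)) h₁ = Finset.univ.noncommProd f h₂ := by
  unfold Finset.noncommProd
  have hm : (Finset.univ.val.map fun i => f (e i)) = Finset.univ.val.map f := by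
    have h3 : (Finset.univ.val.map fun i => f (e i)) = (Finset.univ.val.map ⇑e).map f := by
      rw [Multiset.map_map]; rfl
    rw [h3, show Finset.univ.val.map ⇑e = (Finset.univ.map e.toEmbedding).val from rfl,
      Finset.map_univ_equiv]
  congr 1

theorem isSimpleGroup_of_mulEquiv {G H : Type*} [Group G] [Group H] (hG : IsSimpleGroup G)
    (e : G ≃* H) : IsSimpleGroup H := by
  have : Nontrivial H := e.toEquiv.symm.nontrivial
  exact IsSimpleGroup.isSimpleGroup_of_surjective e.toMonoidHom e.surjective

theorem stmt12 {A G : Type*} [CommGroup A] [Group G] [Finite G]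
    (φ : A →* MulAut G) (n : ℕ) (hn : 0 < n) (Ks : Fin n → Subgroup G)
    (hsimple : ∀ i, IsSimpleGroup (Ks i))
    (hnonab : ∀ i, ¬ ∀ x y : (Ks i), x * y = y * x)
    (hcomm : Pairwise fun i j => ∀ (x : (Ks i)) (y : (Ks j)),
      Commute ((Ks i).subtype x) ((Ks j).subtype y))
    (hprod : Function.Bijective
      (MonoidHom.noncommPiCoprod (fun i => (Ks i).subtype) hcomm))
    (hperm : ∀ (a : A) (i : Fin n), ∃ j, (Ks i).map (φ a).toMonoidHom = Ks j)
    (htrans : ∀ i j : Fin n, ∃ a : A, (Ks i).map (φ a).toMonoidHom = Ks j)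
    (b : A)
    (hsemireg : ∀ m : ℤ, b ^ m ≠ 1 → ∀ i, (Ks i).map (φ (b ^ m)).toMonoidHom ≠ Ks i) :
    ∃ (Hs : Fin (n / orderOf b) → Subgroup G)
      (hc : Pairwise fun j k => ∀ (x : (Hs j)) (y : (Hs k)),
        Commute ((Hs j).subtype x) ((Hs k).subtype y)),
      (∀ j, Nonempty ((Hs j) ≃* (Ks ⟨0, hn⟩))) ∧
      (∀ j, IsSimpleGroup (Hs j)) ∧
      (∀ j, ¬ ∀ x y : (Hs j), x * y = y * x) ∧
      (∀ (a : A) (j), ∃ k, (Hs j).map (φ a).toMonoidHom = Hs k) ∧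
      (∀ j k, ∃ a : A, (Hs j).map (φ a).toMonoidHom = Hs k) ∧
      Function.Injective (MonoidHom.noncommPiCoprod (fun j => (Hs j).subtype) hc) ∧
      (MonoidHom.noncommPiCoprod (fun j => (Hs j).subtype) hc).range = fixedBy (φ b) := by
  classical
  choose σ hσ using hperm
  -- Ks is injective
  have hKne : ∀ i j : Fin n, i ≠ j → Ks i ≠ Ks j := by
    intro i j hij heq
    apply hnonab j
    intro x y
    have hx : (x : G) ∈ Ks i := heq.symm ▸ x.2
    have := hcomm hij ⟨(x : G), hx⟩ y
    exact Subtype.ext this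
  have hKinj : Function.Injective Ks := fun i j h =>
    of_not_not (fun hne => hKne i j hne h)
  have hmemσ : ∀ (a : A) (i : Fin n) (x : G), x ∈ Ks i → φ a x ∈ Ks (σ a i) := by
    intro a i x hx
    rw [← hσ a i]
    exact ⟨x, hx, rfl⟩
  have hσmul : ∀ (a a' : A) (i : Fin n), σ (a * a') i = σ a (σ a' i) := by
    intro a a' i
    have hcomp : (Ks i).map (φ (a * a')).toMonoidHom
        = ((Ks i).map (φ a').toMonoidHom).map (φ a).toMonoidHom := by
      rw [Subgroup.map_map]
      congr 1
      ext x
      simp [map_mul]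
    apply hKinj
    rw [← hσ, hcomp, hσ, hσ]
  have hσone : ∀ i, σ 1 i = i := by
    intro i
    apply hKinj
    rw [← hσ]
    simp only [map_one]
    rw [show (1 : MulAut G).toMonoidHom = MonoidHom.id G from rfl, Subgroup.map_id]
  have hσinvl : ∀ (a : A) (i : Fin n), σ a⁻¹ (σ a i) = i := by
    intro a i
    rw [← hσmul, inv_mul_cancel, hσone]
  have hσinvr : ∀ (a : A) (i : Fin n), σ a (σ a⁻¹ i) = i := by
    intro a i
    rw [← hσmul, mul_inv_cancel, hσone]
  set d := orderOf b with hdd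
  have hbmod : ∀ k : ℕ, b ^ (k % d) = b ^ k := fun k => pow_mod_orderOf b k
  have hfix : ∀ (k : ℕ) (i : Fin n), σ (b ^ k) i = i → d ∣ k := by
    intro k i h
    by_contra hnd
    have hbk : b ^ (k : ℤ) ≠ 1 := by
      rw [zpow_natCast]
      exact fun h1 => hnd (orderOf_dvd_of_pow_eq_one h1)
    exact hsemireg k hbk i (by rw [zpow_natCast, hσ, h])
  have hσpow_id : ∀ (k : ℕ), d ∣ k → ∀ i, σ (b ^ k) i = i := by
    intro k hk i
    rw [orderOf_dvd_iff_pow_eq_one.mp hk, hσone]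
  have hσadd : ∀ (k l : ℕ) (i : Fin n), σ (b ^ (k + l)) i = σ (b ^ k) (σ (b ^ l) i) := by
    intro k l i
    rw [pow_add, hσmul]
  have hd0 : 0 < d := by
    rcases Nat.eq_zero_or_pos d with h0 | h; swap
    · exact h
    exfalso
    have hninj : ¬ Function.Injective (fun k : ℕ => σ (b ^ k) ⟨0, hn⟩) := by
      intro hinj
      have := Finite.of_injective _ hinj
      exact not_finite ℕ
    rw [Function.not_injective_iff] at hninj
    obtain ⟨k, l, hkl, hne⟩ := hninj
    rcases (Ne.lt_or_gt hne) with h | h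
    · have : σ (b ^ (l - k)) (σ (b ^ k) ⟨0, hn⟩) = σ (b ^ k) ⟨0, hn⟩ := by
        rw [← hσadd, Nat.sub_add_cancel h.le, hkl]
      have := hfix _ _ this
      rw [h0] at this
      omega
    · have : σ (b ^ (k - l)) (σ (b ^ l) ⟨0, hn⟩) = σ (b ^ l) ⟨0, hn⟩ := by
        rw [← hσadd, Nat.sub_add_cancel h.le, ← hkl]
      have := hfix _ _ this
      rw [h0] at this
      omega
  -- uniqueness of exponents below d
  have Hu : ∀ (i : Fin n) (k l : ℕ), k < d → l < d → σ (b ^ k) i = σ (b ^ l) i → k = l := by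
    have key : ∀ (i : Fin n) (k l : ℕ), k ≤ l → l < d → σ (b ^ k) i = σ (b ^ l) i → k = l := by
      intro i k l hkl hld h
      have : σ (b ^ (l - k)) (σ (b ^ k) i) = σ (b ^ k) i := by
        rw [← hσadd, Nat.sub_add_cancel hkl, ← h]
      have hdvd := hfix _ _ this
      have := Nat.eq_zero_of_dvd_of_lt hdvd
      omega
    intro i k l hk hl h
    rcases le_total k l with hle | hle
    · exact key i k l hle hl h
    · exact (key i l k hle hk h.symm).symm

  -- orbit machinery
  have hrel_refl : ∀ i : Fin n, ∃ k : ℕ, σ (b ^ k) i = i := by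
    intro i
    exact ⟨0, by rw [pow_zero, hσone]⟩
  have hrel_symm : ∀ i j : Fin n, (∃ k : ℕ, σ (b ^ k) i = j) → ∃ k : ℕ, σ (b ^ k) j = i := by
    rintro i j ⟨k, rfl⟩
    refine ⟨k * (d - 1), ?_⟩
    rw [← hσadd]
    apply hσpow_id
    · have : k * (d - 1) + k = k * d := by
        obtain ⟨d', hd'⟩ := Nat.exists_eq_succ_of_ne_zero hd0.ne'
        rw [hd']
        simp only [Nat.succ_sub_one, Nat.mul_succ]
      rw [this]
      exact ⟨k, mul_comm k d⟩
  have hrel_trans : ∀ i j m : Fin n, (∃ k : ℕ, σ (b ^ k) i = j) →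
      (∃ k : ℕ, σ (b ^ k) j = m) → ∃ k : ℕ, σ (b ^ k) i = m := by
    rintro i j m ⟨k, rfl⟩ ⟨l, rfl⟩
    exact ⟨l + k, by rw [hσadd]⟩
  have horb_ne : ∀ i : Fin n,
      (Finset.univ.filter (fun j => ∃ k : ℕ, σ (b ^ k) i = j)).Nonempty := by
    intro i
    exact ⟨i, Finset.mem_filter.mpr ⟨Finset.mem_univ _, hrel_refl i⟩⟩
  set rep : Fin n → Fin n :=
    fun i => (Finset.univ.filter (fun j => ∃ k : ℕ, σ (b ^ k) i = j)).min' (horb_ne i) with hrep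
  have hrel_to_rep : ∀ i, ∃ k : ℕ, σ (b ^ k) i = rep i := by
    intro i
    have := Finset.min'_mem _ (horb_ne i)
    exact (Finset.mem_filter.mp this).2
  have hrep_eq : ∀ i j, (∃ k : ℕ, σ (b ^ k) i = j) → rep i = rep j := by
    intro i j hij
    have hset : (Finset.univ.filter (fun m => ∃ k : ℕ, σ (b ^ k) i = m))
        = Finset.univ.filter (fun m => ∃ k : ℕ, σ (b ^ k) j = m) := by
      ext m
      simp only [Finset.mem_filter, Finset.mem_univ, true_and]
      constructor
      · intro h
        exact hrel_trans _ _ _ (hrel_symm _ _ hij) h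
      · intro h
        exact hrel_trans _ _ _ hij h
    have h2 := Finset.min'_mem _ (horb_ne j)
    have h3 := Finset.min'_mem _ (horb_ne i)
    apply le_antisymm
    · exact Finset.min'_le _ _ (by rw [hset]; exact h2)
    · exact Finset.min'_le _ _ (by rw [← hset]; exact h3)
  have hrep_idem : ∀ i, rep (rep i) = rep i :=
    fun i => (hrep_eq i (rep i) (hrel_to_rep i)).symm
  have hrel_rep_iff : ∀ i j, rep i = rep j ↔ ∃ k : ℕ, σ (b ^ k) i = j := by
    intro i j
    constructor
    · intro h
      refine hrel_trans _ _ _ (hrel_to_rep i) ?_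
      rw [h]
      exact hrel_symm _ _ (hrel_to_rep j)
    · exact hrep_eq i j
  have hrep_to : ∀ i, ∃ k : ℕ, k < d ∧ σ (b ^ k) (rep i) = i := by
    intro i
    obtain ⟨k, hk⟩ := hrel_symm _ _ (hrel_to_rep i)
    exact ⟨k % d, Nat.mod_lt _ hd0, by rw [hbmod, hk]⟩
  choose pos hposlt hpossp using hrep_to
  -- the set of representatives
  set S : Finset (Fin n) := Finset.univ.filter (fun i => rep i = i) with hS
  have hrepS : ∀ i, rep i ∈ S := by
    intro i
    exact Finset.mem_filter.mpr ⟨Finset.mem_univ _, hrep_idem i⟩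
  have hfiber : ∀ s ∈ S, Finset.univ.filter (fun i => rep i = s)
      = Finset.univ.filter (fun j => ∃ k : ℕ, σ (b ^ k) s = j) := by
    intro s hs
    have hss : rep s = s := (Finset.mem_filter.mp hs).2
    ext i
    simp only [Finset.mem_filter, Finset.mem_univ, true_and]
    constructor
    · intro h
      have : rep s = rep i := by rw [hss, ← h]
      exact (hrel_rep_iff s i).mp this
    · intro h
      have := hrep_eq s i h
      rw [hss] at this
      exact this.symm
  have horbcard : ∀ s : Fin n,
      (Finset.univ.filter (fun j => ∃ k : ℕ, σ (b ^ k) s = j)).card = d := by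
    intro s
    rw [show d = (Finset.range d).card from (Finset.card_range d).symm]
    symm
    apply Finset.card_bij (fun k _ => σ (b ^ k) s)
    · intro k hk
      exact Finset.mem_filter.mpr ⟨Finset.mem_univ _, k, rfl⟩
    · intro k hk l hl h
      exact Hu s k l (Finset.mem_range.mp hk) (Finset.mem_range.mp hl) h
    · intro j hj
      obtain ⟨k, hk⟩ := (Finset.mem_filter.mp hj).2
      exact ⟨k % d, Finset.mem_range.mpr (Nat.mod_lt _ hd0), by rw [hbmod, hk]⟩
  have hcardS : S.card * d = n := by
    have h1 : (Finset.univ : Finset (Fin n)).card = ∑ s ∈ S,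
        (Finset.univ.filter (fun i => rep i = s)).card :=
      Finset.card_eq_sum_card_fiberwise (fun i _ => hrepS i)
    have h2 : ∑ s ∈ S, (Finset.univ.filter (fun i => rep i = s)).card = ∑ _s ∈ S, d :=
      Finset.sum_congr rfl (fun s hs => by rw [hfiber s hs, horbcard s])
    have h4 : n = S.card * d := by
      calc n = (Finset.univ : Finset (Fin n)).card := by simp
      _ = ∑ s ∈ S, (Finset.univ.filter (fun i => rep i = s)).card := h1
      _ = ∑ _s ∈ S, d := h2
      _ = S.card * d := by rw [Finset.sum_const, smul_eq_mul]
    exact h4.symm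
  have hq : S.card = n / d := by
    exact (Nat.div_eq_of_eq_mul_left hd0 hcardS.symm).symm
  have eScard : Fintype.card {x // x ∈ S} = n / d := by
    rw [Fintype.card_coe, hq]
  set en : Fin (n / d) ≃ {x // x ∈ S} := (Fintype.equivFinOfCardEq eScard).symm with hen
  set r : Fin (n / d) → Fin n := fun j => (en j : Fin n) with hr
  have hrS : ∀ j, rep (r j) = r j := fun j => (Finset.mem_filter.mp (en j).2).2
  set oi : Fin n → Fin (n / d) :=
    fun i => en.symm ⟨rep i, hrepS i⟩ with hoi
  have hroi : ∀ i, r (oi i) = rep i := by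
    intro i
    simp only [hr, hoi]
    rw [Equiv.apply_symm_apply]
  have hoir : ∀ j, oi (r j) = j := by
    intro j
    simp only [hoi]
    have h1 : (⟨rep (r j), hrepS (r j)⟩ : {x // x ∈ S}) = en j := Subtype.ext (hrS j)
    rw [h1, Equiv.symm_apply_apply]
  have hoi_eq : ∀ (i : Fin n) (k : Fin (n / d)), oi i = k ↔ rep i = r k := by
    intro i k
    constructor
    · intro h
      rw [← hroi i, h]
    · intro h
      simp only [hoi]
      have h1 : (⟨rep i, hrepS i⟩ : {x // x ∈ S}) = ⟨rep (r k), hrepS (r k)⟩ :=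
        Subtype.ext (by show rep i = rep (r k); rw [h, hrS])
      rw [h1]
      have h2 : (⟨rep (r k), hrepS (r k)⟩ : {x // x ∈ S}) = en k := Subtype.ext (hrS k)
      rw [h2, Equiv.symm_apply_apply]
  have hpos_r : ∀ j, pos (r j) = 0 := by
    intro j
    apply Hu (r j) _ _ (hposlt (r j)) hd0
    rw [pow_zero, hσone]
    have := hpossp (r j)
    rw [hrS j] at this
    exact this

  -- automorphism application helpers
  have hφφ : ∀ (x y : A) (g : G), φ x (φ y g) = φ (x * y) g := by
    intro x y g
    rw [map_mul]
    rfl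
  have hφ1 : ∀ g : G, φ (1 : A) g = g := by
    intro g
    rw [map_one]
    rfl
  have hσbij : ∀ a : A, Function.Bijective (σ a) := by
    intro a
    rw [← Finite.injective_iff_bijective]
    intro i j h
    have h2 := congrArg (σ a⁻¹) h
    rwa [hσinvl, hσinvl] at h2
  -- the twist endomorphism of the direct product
  let Tm : A → ((∀ i, Ks i) →* (∀ i, Ks i)) := fun a => MonoidHom.mk'
    (fun f i => ⟨φ a ↑(f (σ a⁻¹ i)), by
      have h2 := hmemσ a (σ a⁻¹ i) ↑(f (σ a⁻¹ i)) (f (σ a⁻¹ i)).2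
      rwa [hσinvr] at h2⟩)
    (fun f g => by
      funext i
      exact Subtype.ext (by simp))
  have hTm : ∀ (a : A) (f : ∀ i, Ks i) (i : Fin n),
      ((Tm a f i : G)) = φ a ↑(f (σ a⁻¹ i)) := fun _ _ _ => rfl
  set Cd := MonoidHom.noncommPiCoprod (fun i => (Ks i).subtype) hcomm with hCd
  have hCapp : ∀ f : (∀ i, Ks i), Cd f = Finset.univ.noncommProd (fun i => ((f i : G)))
      (fun x _ y _ h => hcomm h (f x) (f y)) := fun _ => rfl
  have hCT : ∀ (a : A) (f : ∀ i, Ks i), φ a (Cd f) = Cd (Tm a f) := by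
    intro a f
    rw [hCapp, hCapp]; refine (Finset.map_noncommProd _ _ _ (φ a)).trans ?_
    exact (noncommProd_reindex (Equiv.ofBijective (σ a⁻¹) (hσbij a⁻¹))
      (fun i => (φ a) ((f i : G))) _ _).symm
  -- the diagonal homomorphism
  have hmemF : ∀ (i : Fin n) (x : G), x ∈ Ks (rep i) → φ (b ^ pos i) x ∈ Ks i := by
    intro i x hx
    have h2 := hmemσ (b ^ pos i) (rep i) x hx
    rwa [hpossp i] at h2
  have hmemF' : ∀ (i : Fin n) (y : ∀ j, Ks (r j)), ((y (oi i) : G)) ∈ Ks (rep i) := by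
    intro i y
    rw [← hroi i]
    exact (y (oi i)).2
  let Fall : (∀ j, Ks (r j)) →* (∀ i, Ks i) := MonoidHom.mk'
    (fun y i => ⟨φ (b ^ pos i) ↑(y (oi i)), hmemF i _ (hmemF' i y)⟩)
    (fun y z => by
      funext i
      exact Subtype.ext (by simp))
  have hFall : ∀ (y : ∀ j, Ks (r j)) (i : Fin n),
      ((Fall y i : G)) = φ (b ^ pos i) ↑(y (oi i)) := fun _ _ => rfl
  have hoi_shift : ∀ i : Fin n, oi (σ b⁻¹ i) = oi i := by
    intro i
    have h1 : rep (σ b⁻¹ i) = rep i :=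
      hrep_eq _ _ ⟨1, by rw [pow_one, hσinvr]⟩
    simp only [hoi]
    exact congrArg _ (Subtype.ext h1)
  have hTFall : ∀ y, Tm b (Fall y) = Fall y := by
    intro y
    funext i
    apply Subtype.ext
    have h1 : rep (σ b⁻¹ i) = rep i :=
      hrep_eq _ _ ⟨1, by rw [pow_one, hσinvr]⟩
    have hstep : σ (b ^ (pos (σ b⁻¹ i) + 1)) (rep i) = i := by
      rw [Nat.add_comm, hσadd, ← h1, hpossp, pow_one, hσinvr]
    have hexp : b * b ^ (pos (σ b⁻¹ i)) = b ^ pos i := by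
      have h2 : (pos (σ b⁻¹ i) + 1) % d = pos i :=
        Hu (rep i) _ _ (Nat.mod_lt _ hd0) (hposlt i) (by rw [hbmod, hstep, hpossp])
      calc b * b ^ pos (σ b⁻¹ i) = b ^ (pos (σ b⁻¹ i) + 1) := (pow_succ' b _).symm
      _ = b ^ ((pos (σ b⁻¹ i) + 1) % d) := (hbmod _).symm
      _ = b ^ pos i := by rw [h2]
    show φ b ↑(Fall y (σ b⁻¹ i)) = ↑(Fall y i)
    rw [hFall, hFall, hoi_shift i, hφφ, hexp]
  have hFix1 : ∀ y, φ b (Cd (Fall y)) = Cd (Fall y) := by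
    intro y
    rw [hCT, hTFall]
  have hTiter : ∀ f : ∀ i, Ks i, Tm b f = f → ∀ (k : ℕ) (i : Fin n),
      ((f (σ (b ^ k) i) : G)) = φ (b ^ k) ↑(f i) := by
    intro f hf k
    induction k with
    | zero =>
      intro i
      rw [pow_zero, hσone]
      exact (hφ1 _).symm
    | succ k ih =>
      intro i
      have h1 : σ (b ^ (k + 1)) i = σ b (σ (b ^ k) i) := by
        rw [Nat.add_comm, hσadd, pow_one]
      have h2 := congrArg Subtype.val (congrFun hf (σ b (σ (b ^ k) i)))
      have h3 : φ b ↑(f (σ b⁻¹ (σ b (σ (b ^ k) i)))) = ((f (σ b (σ (b ^ k) i)) : G)) := h2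
      have h4 : ((f (σ b (σ (b ^ k) i)) : G)) = φ b ↑(f (σ (b ^ k) i)) := by
        rw [← h3, hσinvl]
    
      rw [h1, h4, ih i, hφφ, ← pow_succ']
  have hFix2 : ∀ g : G, φ b g = g → ∃ y, Cd (Fall y) = g := by
    intro g hg
    obtain ⟨f, hf⟩ := hprod.2 g
    have hTf : Tm b f = f := hprod.1 (by rw [← hCT, hf, hg])
    refine ⟨fun j => f (r j), ?_⟩
    rw [← hf]
    congr 1
    funext i
    apply Subtype.ext
    rw [hFall]
    show φ (b ^ pos i) ↑(f (r (oi i))) = ↑(f i)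
    rw [hroi i, ← hTiter f hTf (pos i) (rep i), hpossp]

  -- the diagonal components
  let ψ : ∀ j : Fin (n / d), Ks (r j) →* G :=
    fun j => (Cd.comp Fall).comp (MonoidHom.mulSingle (fun t => Ks (r t)) j)
  have hψ : ∀ (j : Fin (n / d)) (y : Ks (r j)),
      ψ j y = Cd (Fall (Pi.mulSingle j y)) := fun _ _ => rfl
  let Hs : Fin (n / d) → Subgroup G := fun j => (ψ j).range
  have hsupp : ∀ (j : Fin (n / d)) (y : Ks (r j)) (i : Fin n), oi i ≠ j →
      ((Fall (Pi.mulSingle j y) i : G)) = 1 := by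
    intro j y i hij
    rw [hFall, Pi.mulSingle_eq_of_ne hij]
    simp
  have hc : Pairwise fun j k => ∀ (x : (Hs j)) (y : (Hs k)),
      Commute ((Hs j).subtype x) ((Hs k).subtype y) := by
    intro j k hjk x y
    obtain ⟨u, hu⟩ := MonoidHom.mem_range.mp x.2
    obtain ⟨v, hv⟩ := MonoidHom.mem_range.mp y.2
    show ((x : G)) * ((y : G)) = ((y : G)) * ((x : G))
    rw [← hu, ← hv, hψ, hψ, ← map_mul, ← map_mul,
      (Pi.mulSingle_commute (f := fun t => ↥(Ks (r t))) hjk u v).eq, map_mul, map_mul]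
  have hFallinj : ∀ y z : (∀ j, Ks (r j)), Fall y = Fall z → y = z := by
    intro y z h
    funext j
    have h2 : φ (b ^ pos (r j)) ↑(y (oi (r j))) = φ (b ^ pos (r j)) ↑(z (oi (r j))) :=
      congrArg Subtype.val (congrFun h (r j))
    rw [hpos_r j, pow_zero, hφ1, hφ1] at h2
    have h4 : ∀ w : (∀ t, Ks (r t)), ((w (oi (r j)) : G)) = ((w j : G)) := by
      intro w
      rw [hoir j]
    rw [h4 y, h4 z] at h2
    exact Subtype.ext h2
  have hΨinj : ∀ y z, Cd (Fall y) = Cd (Fall z) → y = z := by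
    intro y z h
    exact hFallinj y z (hprod.1 h)
  have hψinj : ∀ j, Function.Injective (ψ j) := by
    intro j u v h
    have h1 : (Pi.mulSingle j u : ∀ t, Ks (r t)) = Pi.mulSingle j v := hΨinj _ _ h
    have h2 := congrFun h1 j
    rwa [Pi.mulSingle_eq_same, Pi.mulSingle_eq_same] at h2
  let ρ : (∀ j, Ks (r j)) →* (∀ j, Hs j) := MonoidHom.mk'
    (fun y j => ⟨ψ j (y j), ⟨y j, rfl⟩⟩)
    (fun y z => by
      funext j
      exact Subtype.ext (by simp [map_mul]))
  have hρ : ∀ y j, ((ρ y j : G)) = ψ j (y j) := fun _ _ => rfl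
  have hρsurj : Function.Surjective ρ := by
    intro h
    choose u hu using fun j => MonoidHom.mem_range.mp (h j).2
    exact ⟨u, funext fun j => Subtype.ext (hu j)⟩
  set CH := MonoidHom.noncommPiCoprod (fun j => (Hs j).subtype) hc with hCH
  have hCHρ : CH.comp ρ = Cd.comp Fall := by
    apply MonoidHom.pi_ext
    intro j u
    have h1 : ρ (Pi.mulSingle j u) = Pi.mulSingle j (⟨ψ j u, ⟨u, rfl⟩⟩ : Hs j) := by
      funext k
      by_cases h : k = j
      · subst h
        apply Subtype.ext
        show ψ k ((Pi.mulSingle k u : ∀ t, Ks (r t)) k) = _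
        rw [Pi.mulSingle_eq_same, Pi.mulSingle_eq_same]
      · apply Subtype.ext
        show ψ k ((Pi.mulSingle j u : ∀ t, Ks (r t)) k) = _
        rw [Pi.mulSingle_eq_of_ne h, Pi.mulSingle_eq_of_ne h, map_one]
        rfl
    show CH (ρ (Pi.mulSingle j u)) = (Cd.comp Fall) (Pi.mulSingle j u)
    rw [h1, MonoidHom.noncommPiCoprod_mulSingle]
    rfl
  have hCHρ' : ∀ y, CH (ρ y) = Cd (Fall y) := fun y => DFunLike.congr_fun hCHρ y
  have hCHinj : Function.Injective CH := by
    intro x y h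
    obtain ⟨u, rfl⟩ := hρsurj x
    obtain ⟨v, rfl⟩ := hρsurj y
    rw [hCHρ', hCHρ'] at h
    rw [hΨinj u v h]
  have hrange : CH.range = fixedBy (φ b) := by
    ext g
    constructor
    · rintro ⟨x, rfl⟩
      obtain ⟨u, rfl⟩ := hρsurj x
      show φ b (CH (ρ u)) = CH (ρ u)
      rw [hCHρ']
      exact hFix1 u
    · intro hg
      have hg' : φ b g = g := hg
      obtain ⟨y, hy⟩ := hFix2 g hg'
      exact ⟨ρ y, by rw [hCHρ', hy]⟩
  -- isomorphisms
  have hKiso : ∀ i i' : Fin n, Nonempty ((Ks i) ≃* (Ks i')) := by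
    intro i i'
    obtain ⟨a, ha⟩ := htrans i i'
    exact ⟨((Ks i).equivMapOfInjective (φ a).toMonoidHom (φ a).injective).trans
      (MulEquiv.subgroupCongr ha)⟩
  have eHs : ∀ j, (Hs j) ≃* Ks (r j) := fun j => (MonoidHom.ofInjective (hψinj j)).symm
  -- the action on the new components
  have hcomm_ab : ∀ (a : A) (m : ℕ) (i0 : Fin n), σ a (σ (b ^ m) i0) = σ (b ^ m) (σ a i0) := by
    intro a m i0
    rw [← hσmul, mul_comm, hσmul]
  have hmap : ∀ (a : A) (j : Fin (n / d)),
      (Hs j).map (φ a).toMonoidHom = Hs (oi (σ a (r j))) := by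
    intro a j
    have hrk : r (oi (σ a (r j))) = rep (σ a (r j)) := hroi _
    have hmz : ∀ y : Ks (r j),
        φ ((b ^ pos (σ a (r j)))⁻¹) (φ a ↑y) ∈ Ks (r (oi (σ a (r j)))) := by
      intro y
      have h1 : φ a ↑y ∈ Ks (σ a (r j)) := hmemσ a (r j) ↑y y.2
      have h2 : φ a ↑y ∈ Ks (σ (b ^ pos (σ a (r j))) (rep (σ a (r j)))) := by
        rw [hpossp]
        exact h1
      have h3 := hmemσ ((b ^ pos (σ a (r j)))⁻¹) _ _ h2
      rw [hσinvl] at h3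
      rw [hrk]
      exact h3
    have hiff : ∀ i : Fin n, oi (σ a⁻¹ i) = j ↔ oi i = oi (σ a (r j)) := by
      intro i
      rw [hoi_eq, hoi_eq, hrk, ← hrS j, hrel_rep_iff, hrel_rep_iff]
      constructor
      · rintro ⟨m, hm⟩
        refine ⟨m, ?_⟩
        have h5 : σ (b ^ m) i = σ (b ^ m) (σ a (σ a⁻¹ i)) := by rw [hσinvr]
        rw [h5, ← hcomm_ab, hm, hrS]
      · rintro ⟨m, hm⟩
        refine ⟨m, ?_⟩
        have h5 : σ a⁻¹ (σ (b ^ m) i) = σ a⁻¹ (σ a (rep (r j))) := by rw [hm]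
        rw [hcomm_ab a⁻¹ m i, hσinvl, hrS] at h5
        exact h5
    have hkey : ∀ y : Ks (r j),
        φ a (ψ j y) = ψ (oi (σ a (r j))) ⟨φ ((b ^ pos (σ a (r j)))⁻¹) (φ a ↑y), hmz y⟩ := by
      intro y
      rw [hψ, hψ, hCT]
      congr 1
      funext i
      apply Subtype.ext
      rw [hTm, hFall, hFall]
      by_cases hcase : oi i = oi (σ a (r j))
      · have hj2 : oi (σ a⁻¹ i) = j := (hiff i).mpr hcase
        have hvals : ∀ (m : Fin (n / d)) (w : Ks (r m)) (t : Fin (n / d)) (ht : t = m),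
            (((Pi.mulSingle m w : ∀ t', Ks (r t')) t : Ks (r t)) : G) = ↑w := by
          intro m w t ht
          subst ht
          rw [Pi.mulSingle_eq_same]
        rw [hvals j y _ hj2, hvals (oi (σ a (r j))) _ _ hcase]
        simp only [hφφ]
        have hrepi' : rep (σ a⁻¹ i) = r j := (hoi_eq _ _).mp hj2
        have hi' : σ (b ^ pos (σ a⁻¹ i)) (r j) = σ a⁻¹ i := by
          rw [← hrepi']
          exact hpossp _
        have hstep2 : σ (b ^ (pos (σ a⁻¹ i) + pos (σ a (r j)))) (rep i) = i := by
          rw [(hoi_eq _ _).mp hcase, hrk, hσadd, hpossp, ← hcomm_ab, hi', hσinvr]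
        have h6 : (pos (σ a⁻¹ i) + pos (σ a (r j))) % d = pos i :=
          Hu (rep i) _ _ (Nat.mod_lt _ hd0) (hposlt i) (by rw [hbmod, hstep2, hpossp])
        have hexp2 : b ^ pos (σ a⁻¹ i) * b ^ pos (σ a (r j)) = b ^ pos i := by
          calc b ^ pos (σ a⁻¹ i) * b ^ pos (σ a (r j))
              = b ^ (pos (σ a⁻¹ i) + pos (σ a (r j))) := (pow_add b _ _).symm
          _ = b ^ ((pos (σ a⁻¹ i) + pos (σ a (r j))) % d) := (hbmod _).symm
          _ = b ^ pos i := by rw [h6]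
        have hA : a * b ^ pos (σ a⁻¹ i)
            = b ^ pos i * ((b ^ pos (σ a (r j)))⁻¹ * a) := by
          have h7 : b ^ pos (σ a⁻¹ i) = b ^ pos i * (b ^ pos (σ a (r j)))⁻¹ := by
            rw [← hexp2]
            group
          rw [mul_comm a, h7, mul_assoc]
        rw [hA]
      · have hj2 : oi (σ a⁻¹ i) ≠ j := fun h => hcase ((hiff i).mp h)
        have hz1 : (((Pi.mulSingle j y : ∀ t', Ks (r t')) (oi (σ a⁻¹ i)) :
            Ks (r (oi (σ a⁻¹ i)))) : G) = 1 := by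
          rw [Pi.mulSingle_eq_of_ne hj2]
          rfl
        have hz2 : (((Pi.mulSingle (oi (σ a (r j)))
            (⟨φ ((b ^ pos (σ a (r j)))⁻¹) (φ a ↑y), hmz y⟩ : Ks (r (oi (σ a (r j))))) :
            ∀ t', Ks (r t')) (oi i) : Ks (r (oi i))) : G) = 1 := by
          rw [Pi.mulSingle_eq_of_ne hcase]
          rfl
        rw [hz1, hz2]
        simp
    ext g
    simp only [Subgroup.mem_map]
    constructor
    · rintro ⟨x, hx, rfl⟩
      obtain ⟨u, rfl⟩ := MonoidHom.mem_range.mp hx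
      exact ⟨_, (hkey u).symm⟩
    · intro hgmem
      obtain ⟨w, rfl⟩ := MonoidHom.mem_range.mp hgmem
      have hmemu : φ a⁻¹ (φ (b ^ pos (σ a (r j))) ↑w) ∈ Ks (r j) := by
        have h1 : ((w : G)) ∈ Ks (rep (σ a (r j))) := by
          rw [← hrk]
          exact w.2
        have h2 := hmemσ (b ^ pos (σ a (r j))) _ _ h1
        rw [hpossp] at h2
        have h3 := hmemσ a⁻¹ _ _ h2
        rwa [hσinvl] at h3
      set u : Ks (r j) := ⟨φ a⁻¹ (φ (b ^ pos (σ a (r j))) ↑w), hmemu⟩ with hu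
      have hzu : (⟨φ ((b ^ pos (σ a (r j)))⁻¹) (φ a ↑u), hmz u⟩ :
          Ks (r (oi (σ a (r j))))) = w := by
        apply Subtype.ext
        show φ ((b ^ pos (σ a (r j)))⁻¹) (φ a (φ a⁻¹ (φ (b ^ pos (σ a (r j))) ↑w))) = ↑w
        simp only [hφφ]
        rw [show (b ^ pos (σ a (r j)))⁻¹ * (a * (a⁻¹ * b ^ pos (σ a (r j)))) = 1 by group]
        exact hφ1 _
      refine ⟨ψ j u, ⟨u, rfl⟩, ?_⟩
      show φ a (ψ j u) = _
      rw [hkey u, hzu]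
  refine ⟨Hs, hc, ?_, ?_, ?_, fun a j => ⟨oi (σ a (r j)), hmap a j⟩, ?_, hCHinj, hrange⟩
  · intro j
    obtain ⟨e2⟩ := hKiso (r j) ⟨0, hn⟩
    exact ⟨(eHs j).trans e2⟩
  · intro j
    exact isSimpleGroup_of_mulEquiv (hsimple (r j)) (eHs j).symm
  · intro j hco
    apply hnonab (r j)
    intro x y
    have h1 := hco ((eHs j).symm x) ((eHs j).symm y)
    have h2 : (eHs j).symm (x * y) = (eHs j).symm (y * x) := by
      rw [map_mul, map_mul, h1]
    exact (eHs j).symm.injective h2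
  · intro j k0
    obtain ⟨a, ha⟩ := htrans (r j) (r k0)
    have h1 : σ a (r j) = r k0 := hKinj (by rw [← hσ, ha])
    exact ⟨a, by rw [hmap a j, h1, hoir]⟩
end
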